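/- arXiv:1001.0610 — 8 statements merged into one kernel-verified Lean document; each statement's English description precedes it below -/
import Mathlib

section
/- Let ν be a probability distribution on the nonnegative integers, let Z have law ν, let α ∈ [0,1], let X be binomial with parameters Z and α (i.e., conditionally on Z = z, X ∼ Bin(z, α)), and let Y = Z − X. Define μ_k(l) = P(Y = l | X = k). Then ν is strongly log-concave (i.e., i·ν(i)² ≥ (i+1)·ν(i−1)·ν(i+1) for all i ≥ 1) if and only if for all k, l with the relevant conditional probabilities positive, μ_{k+1}(l+1)/μ_{k+1}(l) ≤ μ_k(l+1)/μ_k(l), equivalently ν(k+l+2)·C(k+l+2, k+1)·ν(k+l)·C(k+l, k) ≤ ν(k+l+1)²·C(k+l+1, k+1)·C(k+l+1, k). -/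
lemma choose_key (n k : ℕ) :
    (n + 1) * ((n + 2).choose (k + 1) * n.choose k) =
      (n + 2) * ((n + 1).choose (k + 1) * (n + 1).choose k) := by
  have h1 : (n + 1) * n.choose k = (n + 1).choose (k + 1) * (k + 1) :=
    Nat.add_one_mul_choose_eq n k
  have h2 : (n + 2) * (n + 1).choose k = (n + 2).choose (k + 1) * (k + 1) :=
    Nat.add_one_mul_choose_eq (n + 1) k
  calc (n + 1) * ((n + 2).choose (k + 1) * n.choose k)
      = ((n + 1) * n.choose k) * (n + 2).choose (k + 1) := by ring
    _ = ((n + 1).choose (k + 1) * (k + 1)) * (n + 2).choose (k + 1) := by rw [h1]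
    _ = ((n + 2).choose (k + 1) * (k + 1)) * (n + 1).choose (k + 1) := by ring
    _ = ((n + 2) * (n + 1).choose k) * (n + 1).choose (k + 1) := by rw [h2]
    _ = (n + 2) * ((n + 1).choose (k + 1) * (n + 1).choose k) := by ring

/-- For a probability distribution `ν` on `ℕ` and `α ∈ (0,1)`, with
`Z ∼ ν`, `X ∼ Bin(Z,α)`, `Y = Z - X`, strong log-concavity of `ν` is
equivalent to the ratio inequality
`μ_{k+1}(l+1)/μ_{k+1}(l) ≤ μ_k(l+1)/μ_k(l)` for the conditional laws
`μ_k(l) = P(Y = l | X = k)`, which rewrites (since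
`P(X=k, Y=l) = ν(k+l)·C(k+l,k)·α^k·(1-α)^l`) as the displayed
binomial-coefficient inequality. -/
theorem slc_iff_conditional_ratio (ν : ℕ → ℝ) (hν0 : ∀ i, 0 ≤ ν i)
    (hν1 : ∑' i, ν i = 1) (α : ℝ) (hα0 : 0 < α) (hα1 : α < 1) :
    (∀ i : ℕ, 1 ≤ i → (i : ℝ) * ν i ^ 2 ≥ ((i : ℝ) + 1) * ν (i - 1) * ν (i + 1)) ↔
    (∀ k l : ℕ,
      ν (k + l + 2) * ((k + l + 2).choose (k + 1) : ℝ) *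
          (ν (k + l) * ((k + l).choose k : ℝ)) ≤
        ν (k + l + 1) * ((k + l + 1).choose (k + 1) : ℝ) *
          (ν (k + l + 1) * ((k + l + 1).choose k : ℝ))) := by
  have key : ∀ n k : ℕ,
      ((n : ℝ) + 1) * (((n + 2).choose (k + 1) : ℝ) * (n.choose k : ℝ)) =
        ((n : ℝ) + 2) * (((n + 1).choose (k + 1) : ℝ) * ((n + 1).choose k : ℝ)) := by
    intro n k
    have := choose_key n k
    exact_mod_cast congrArg (Nat.cast : ℕ → ℝ) this
  constructor
  · intro h k l
    set n := k + l with hn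
    have hi := h (n + 1) (by omega)
    simp only [Nat.add_sub_cancel] at hi
    push_cast at hi
    have hB : (0 : ℝ) < ((n + 1).choose (k + 1) : ℝ) * ((n + 1).choose k : ℝ) := by
      have h1 : 0 < (n + 1).choose (k + 1) := Nat.choose_pos (by omega)
      have h2 : 0 < (n + 1).choose k := Nat.choose_pos (by omega)
      positivity
    have hk := key n k
    have hn1 : (0 : ℝ) < (n : ℝ) + 1 := by positivity
    simp only [show n + 1 + 1 = n + 2 by omega] at hi
    have hmul : ((n : ℝ) + 1) * (ν (n + 2) * ((n + 2).choose (k + 1) : ℝ) *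
          (ν n * ((n).choose k : ℝ))) ≤
        ((n : ℝ) + 1) * (ν (n + 1) * ((n + 1).choose (k + 1) : ℝ) *
          (ν (n + 1) * ((n + 1).choose k : ℝ))) := by
      calc ((n : ℝ) + 1) * (ν (n + 2) * ((n + 2).choose (k + 1) : ℝ) *
            (ν n * ((n).choose k : ℝ)))
          = (ν (n + 2) * ν n) * (((n : ℝ) + 1) *
              (((n + 2).choose (k + 1) : ℝ) * ((n).choose k : ℝ))) := by ring
        _ = (ν (n + 2) * ν n) * (((n : ℝ) + 2) *
              (((n + 1).choose (k + 1) : ℝ) * ((n + 1).choose k : ℝ))) := by rw [hk]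
        _ = ((((n : ℝ) + 1) + 1) * ν n * ν (n + 2)) *
              (((n + 1).choose (k + 1) : ℝ) * ((n + 1).choose k : ℝ)) := by ring
        _ ≤ (((n : ℝ) + 1) * ν (n + 1) ^ 2) *
              (((n + 1).choose (k + 1) : ℝ) * ((n + 1).choose k : ℝ)) :=
            mul_le_mul_of_nonneg_right hi hB.le
        _ = ((n : ℝ) + 1) * (ν (n + 1) * ((n + 1).choose (k + 1) : ℝ) *
              (ν (n + 1) * ((n + 1).choose k : ℝ))) := by ring
    exact le_of_mul_le_mul_left hmul hn1
  · intro h i hi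
    obtain ⟨n, rfl⟩ : ∃ n, i = n + 1 := ⟨i - 1, by omega⟩
    simp only [Nat.add_sub_cancel]
    push_cast
    have hkl := h 0 n
    simp only [Nat.zero_add, Nat.choose_zero_right, Nat.cast_one] at hkl
    have hk := key n 0
    simp only [Nat.choose_zero_right, Nat.cast_one] at hk
    simp only [Nat.choose_one_right] at hkl
    push_cast at hkl
    nlinarith [hkl]
end

section
/- Let ν be a probability distribution on ℕ with no internal zeros in its support, let α ∈ (0,1), let Z ∼ ν, X ∼ Bin(Z, α), Y = Z − X. If ν is strongly log-concave, then Y is stochastically decreasing in X: for all k with P(X = k) > 0 and P(X = k+1) > 0 and all t, P(Y ≥ t | X = k+1) ≤ P(Y ≥ t | X = k). -/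
lemma binom_term_le_one (α : ℝ) (h0 : 0 ≤ α) (h1 : α ≤ 1) (k l : ℕ) :
    ((k + l).choose k : ℝ) * α ^ k * (1 - α) ^ l ≤ 1 := by
  have hadd : (α + (1 - α)) ^ (k + l) = 1 := by norm_num
  have h := add_pow α (1 - α) (k + l)
  rw [hadd] at h
  have key : ∀ m ∈ Finset.range (k + l + 1),
      0 ≤ α ^ m * (1 - α) ^ (k + l - m) * ((k + l).choose m : ℝ) := by
    intro m _
    have h1α : (0 : ℝ) ≤ 1 - α := by linarith
    positivity
  have hk : k ∈ Finset.range (k + l + 1) := by simp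
  have hle := Finset.single_le_sum key hk
  rw [← h] at hle
  have : k + l - k = l := by omega
  rw [this] at hle
  linarith [hle]

lemma core_nu (ν : ℕ → ℝ) (hν0 : ∀ i, 0 ≤ ν i)
    (hniz : ∀ a b c : ℕ, a ≤ b → b ≤ c → 0 < ν a → 0 < ν c → 0 < ν b)
    (hslc : ∀ i : ℕ, 1 ≤ i → (i : ℝ) * ν i ^ 2 ≥ ((i : ℝ) + 1) * ν (i - 1) * ν (i + 1)) :
    ∀ n n' : ℕ, n ≤ n' →
      ((n' : ℝ) + 1) * ν (n' + 1) * ν n ≤ ((n : ℝ) + 1) * ν (n + 1) * ν n' := by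
  intro n n' h
  induction n', h using Nat.le_induction with
  | base => exact le_refl _
  | succ m hm IH =>
    push_cast
    by_cases h0 : ν (m + 1) = 0
    · have hz : ν (m + 1 + 1) * ν n = 0 := by
        rcases (hν0 (m + 1 + 1)).eq_or_lt with h2 | h2
        · rw [← h2, zero_mul]
        rcases (hν0 n).eq_or_lt with h3 | h3
        · rw [← h3, mul_zero]
        exact absurd (hniz n (m + 1) (m + 1 + 1) (by omega) (by omega) h3 h2)
          (by simp [h0])
      calc ((m : ℝ) + 1 + 1) * ν (m + 1 + 1) * ν n
          = ((m : ℝ) + 1 + 1) * (ν (m + 1 + 1) * ν n) := mul_assoc _ _ _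
        _ = 0 := by rw [hz, mul_zero]
        _ ≤ ((n : ℝ) + 1) * ν (n + 1) * ν (m + 1) :=
            mul_nonneg (mul_nonneg (by positivity) (hν0 _)) (hν0 _)
    · have hpos : 0 < ν (m + 1) := (hν0 _).lt_of_ne (Ne.symm h0)
      have hs' : ((m : ℝ) + 1 + 1) * ν m * ν (m + 1 + 1) ≤ ((m : ℝ) + 1) * ν (m + 1) ^ 2 := by
        have := hslc (m + 1) (by omega)
        push_cast at this
        simpa using this
      have h1 := mul_le_mul_of_nonneg_left IH
        (mul_nonneg (by positivity : (0:ℝ) ≤ (m : ℝ) + 2) (hν0 (m + 1 + 1)))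
      have h2 := mul_le_mul_of_nonneg_left hs'
        (mul_nonneg (by positivity : (0:ℝ) ≤ (n : ℝ) + 1) (hν0 (n + 1)))
      have hc : (0 : ℝ) < ((m : ℝ) + 1) * ν (m + 1) := by positivity
      have key : ((m : ℝ) + 1 + 1) * ν (m + 1 + 1) * ν n * (((m : ℝ) + 1) * ν (m + 1)) ≤
          ((n : ℝ) + 1) * ν (n + 1) * ν (m + 1) * (((m : ℝ) + 1) * ν (m + 1)) := by
        nlinarith [h1, h2]
      exact le_of_mul_le_mul_right key hc

lemma choose_cast_id (n k : ℕ) :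
    ((n + 1).choose (k + 1) : ℝ) * ((k : ℝ) + 1) = ((n : ℝ) + 1) * (n.choose k : ℝ) := by
  have h := (Nat.add_one_mul_choose_eq n k).symm
  exact_mod_cast congrArg (Nat.cast : ℕ → ℝ) h


/-- If `ν` is a strongly log-concave probability distribution on `ℕ` with no
internal zeros, `α ∈ (0,1)`, `Z ∼ ν`, `X ∼ Bin(Z,α)`, `Y = Z - X` (so the
joint law is `p k l = ν(k+l)·C(k+l,k)·α^k·(1-α)^l`), then `Y` is
stochastically decreasing in `X`. -/
theorem slc_implies_stochastically_decreasing (ν : ℕ → ℝ) (hν0 : ∀ i, 0 ≤ ν i)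
    (hν1 : ∑' i, ν i = 1)
    (hniz : ∀ a b c : ℕ, a ≤ b → b ≤ c → 0 < ν a → 0 < ν c → 0 < ν b)
    (hslc : ∀ i : ℕ, 1 ≤ i → (i : ℝ) * ν i ^ 2 ≥ ((i : ℝ) + 1) * ν (i - 1) * ν (i + 1))
    (α : ℝ) (hα0 : 0 < α) (hα1 : α < 1)
    (p : ℕ → ℕ → ℝ)
    (hp : ∀ k l, p k l = ν (k + l) * ((k + l).choose k : ℝ) * α ^ k * (1 - α) ^ l)
    (k t : ℕ) (hXk : 0 < ∑' l, p k l) (hXk1 : 0 < ∑' l, p (k + 1) l) :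
    (∑' l, if t ≤ l then p (k + 1) l else 0) / (∑' l, p (k + 1) l) ≤
      (∑' l, if t ≤ l then p k l else 0) / (∑' l, p k l) := by
  have h1α : (0 : ℝ) ≤ 1 - α := by linarith
  -- nonnegativity of p
  have hp_nonneg : ∀ j l, 0 ≤ p j l := by
    intro j l
    rw [hp]
    exact mul_nonneg (mul_nonneg (mul_nonneg (hν0 _) (by positivity)) (by positivity))
      (pow_nonneg h1α _)
  -- summability
  have hsumν : Summable ν := by
    by_contra h
    rw [tsum_eq_zero_of_not_summable h] at hν1
    norm_num at hν1
  have hpsum : ∀ j, Summable (fun l => p j l) := by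
    intro j
    refine Summable.of_nonneg_of_le (fun l => hp_nonneg j l) (fun l => ?_)
      (hsumν.comp_injective (add_right_injective j))
    calc p j l = ν (j + l) * (((j + l).choose j : ℝ) * α ^ j * (1 - α) ^ l) := by
          rw [hp]; ring
      _ ≤ ν (j + l) * 1 :=
          mul_le_mul_of_nonneg_left (binom_term_le_one α hα0.le hα1.le j l) (hν0 _)
      _ = ν (j + l) := mul_one _
  -- MLR
  have mlr : ∀ l l', l ≤ l' → p (k + 1) l' * p k l ≤ p k l' * p (k + 1) l := by
    intro l l' hll
    have hcore := core_nu ν hν0 hniz hslc (k + l) (k + l') (by omega)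
    have hCC : (0 : ℝ) ≤ ((k + l').choose k : ℝ) * ((k + l).choose k : ℝ) := by positivity
    have hcoef : ν (k + l' + 1) * (((k + l' + 1).choose (k + 1) : ℝ)) *
        (ν (k + l) * ((k + l).choose k : ℝ)) ≤
        ν (k + l + 1) * (((k + l + 1).choose (k + 1) : ℝ)) *
        (ν (k + l') * ((k + l').choose k : ℝ)) := by
      refine le_of_mul_le_mul_right ?_ (show (0 : ℝ) < (k : ℝ) + 1 by positivity)
      calc ν (k + l' + 1) * (((k + l' + 1).choose (k + 1) : ℝ)) *
            (ν (k + l) * ((k + l).choose k : ℝ)) * ((k : ℝ) + 1)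
          = (((k + l' : ℕ) : ℝ) + 1) * ν (k + l' + 1) * ν (k + l) *
            (((k + l').choose k : ℝ) * ((k + l).choose k : ℝ)) := by
            linear_combination (ν (k + l' + 1) * ν (k + l) * ((k + l).choose k : ℝ)) *
              choose_cast_id (k + l') k
        _ ≤ (((k + l : ℕ) : ℝ) + 1) * ν (k + l + 1) * ν (k + l') *
            (((k + l').choose k : ℝ) * ((k + l).choose k : ℝ)) :=
            mul_le_mul_of_nonneg_right hcore hCC
        _ = ν (k + l + 1) * (((k + l + 1).choose (k + 1) : ℝ)) *
            (ν (k + l') * ((k + l').choose k : ℝ)) * ((k : ℝ) + 1) := by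
            linear_combination (-(ν (k + l + 1) * ν (k + l') * ((k + l').choose k : ℝ))) *
              choose_cast_id (k + l) k
    have hD : (0 : ℝ) ≤ α ^ (k + 1) * α ^ k * ((1 - α) ^ l' * (1 - α) ^ l) :=
      mul_nonneg (by positivity) (mul_nonneg (pow_nonneg h1α _) (pow_nonneg h1α _))
    have e1 : k + 1 + l' = k + l' + 1 := by omega
    have e2 : k + 1 + l = k + l + 1 := by omega
    calc p (k + 1) l' * p k l
        = ν (k + l' + 1) * (((k + l' + 1).choose (k + 1) : ℝ)) *
            (ν (k + l) * ((k + l).choose k : ℝ)) *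
            (α ^ (k + 1) * α ^ k * ((1 - α) ^ l' * (1 - α) ^ l)) := by
          rw [hp, hp, e1]; ring
      _ ≤ ν (k + l + 1) * (((k + l + 1).choose (k + 1) : ℝ)) *
            (ν (k + l') * ((k + l').choose k : ℝ)) *
            (α ^ (k + 1) * α ^ k * ((1 - α) ^ l' * (1 - α) ^ l)) :=
          mul_le_mul_of_nonneg_right hcoef hD
      _ = p k l' * p (k + 1) l := by rw [hp, hp, e2]; ring
  -- tail sums summable
  have hfsum : ∀ j, Summable (fun l => if t ≤ l then p j l else 0) := by
    intro j
    refine Summable.of_nonneg_of_le (fun l => ?_) (fun l => ?_) (hpsum j)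
    · split
      · exact hp_nonneg j l
      · exact le_rfl
    · split
      · exact le_rfl
      · exact hp_nonneg j l
  have hgsum : ∀ j, Summable (fun l => if t ≤ l then (0 : ℝ) else p j l) := by
    intro j
    refine Summable.of_nonneg_of_le (fun l => ?_) (fun l => ?_) (hpsum j)
    · split
      · exact le_rfl
      · exact hp_nonneg j l
    · split
      · exact hp_nonneg j l
      · exact le_rfl
  -- splitting
  have hsplit : ∀ j, ∑' l, p j l =
      (∑' l, if t ≤ l then p j l else 0) + ∑ l ∈ Finset.range t, p j l := by
    intro j
    have h1 : ∀ l, p j l = (if t ≤ l then p j l else 0) + (if t ≤ l then 0 else p j l) := by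
      intro l; split <;> simp
    rw [tsum_congr h1, Summable.tsum_add (hfsum j) (hgsum j)]
    congr 1
    rw [tsum_eq_sum (s := Finset.range t)
      (by intro b hb; simp only [Finset.mem_range, not_lt] at hb; rw [if_pos hb])]
    refine Finset.sum_congr rfl fun l hl => ?_
    simp only [Finset.mem_range] at hl
    rw [if_neg (by omega)]
  rw [div_le_div_iff₀ hXk1 hXk, hsplit k, hsplit (k + 1)]
  have key : (∑' l, if t ≤ l then p (k + 1) l else 0) * ∑ l ∈ Finset.range t, p k l ≤
      (∑' l, if t ≤ l then p k l else 0) * ∑ l ∈ Finset.range t, p (k + 1) l := by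
    rw [Finset.mul_sum, Finset.mul_sum]
    refine Finset.sum_le_sum fun l hl => ?_
    simp only [Finset.mem_range] at hl
    rw [← tsum_mul_right, ← tsum_mul_right]
    refine Summable.tsum_le_tsum (fun l' => ?_) ((hfsum (k + 1)).mul_right _) ((hfsum k).mul_right _)
    by_cases h : t ≤ l'
    · simp only [if_pos h]
      exact mlr l l' (by omega)
    · simp [if_neg h]
  nlinarith [key]
end

section
/- Let ν be a probability distribution on ℕ with no internal zeros, strongly log-concave, α ∈ (0,1), Z ∼ ν, X ∼ Bin(Z,α), Y = Z − X. Then X and Y are negatively correlated in the strong sense that for all s, t: P(X ≥ s and Y ≥ t) ≤ P(X ≥ s)·P(Y ≥ t). -/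
lemma u_lc_step (u : ℕ → ℝ) (h0 : ∀ i, 0 ≤ u i)
    (hlc : ∀ i, u i * u (i+2) ≤ u (i+1)^2)
    (hpos : ∀ a b c : ℕ, a ≤ b → b ≤ c → 0 < u a → 0 < u c → 0 < u b) :
    ∀ m e, u m * u (m+e+1) ≤ u (m+1) * u (m+e) := by
  intro m e
  induction e with
  | zero => simp [mul_comm]
  | succ e ih =>
    rcases eq_or_lt_of_le (h0 m) with hm | hm
    · have : u m * u (m+(e+1)+1) = 0 := by rw [← hm]; ring
      rw [this]; exact mul_nonneg (h0 _) (h0 _)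
    rcases eq_or_lt_of_le (h0 (m+(e+1)+1)) with hM | hM
    · have : u m * u (m+(e+1)+1) = 0 := by rw [← hM]; ring
      rw [this]; exact mul_nonneg (h0 _) (h0 _)
    have hme : 0 < u (m+e) := hpos m (m+e) (m+(e+1)+1) (by omega) (by omega) hm hM
    have hme1 : 0 < u (m+e+1) := hpos m (m+e+1) (m+(e+1)+1) (by omega) (by omega) hm hM
    have key := mul_le_mul ih (hlc (m+e)) (mul_nonneg (h0 _) (h0 _))
      (mul_nonneg (h0 _) (h0 _))
    have h2 : m+e+2 = m+(e+1)+1 := by omega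
    rw [h2] at key
    refine le_of_mul_le_mul_right ?_ (mul_pos hme hme1)
    calc u m * u (m+(e+1)+1) * (u (m+e) * u (m+e+1))
        = u m * u (m+e+1) * (u (m+e) * u (m+(e+1)+1)) := by ring
      _ ≤ u (m+1) * u (m+e) * u (m+e+1)^2 := key
      _ = u (m+1) * u (m+(e+1)) * (u (m+e) * u (m+e+1)) := by
          have : m+(e+1) = m+e+1 := by omega
          rw [this]; ring

lemma u_lc_quad (u : ℕ → ℝ) (h0 : ∀ i, 0 ≤ u i)
    (hlc : ∀ i, u i * u (i+2) ≤ u (i+1)^2)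
    (hpos : ∀ a b c : ℕ, a ≤ b → b ≤ c → 0 < u a → 0 < u c → 0 < u b) :
    ∀ m d e, u m * u (m+d+e) ≤ u (m+d) * u (m+e) := by
  intro m d e
  induction d with
  | zero => simp
  | succ d ih =>
    rcases eq_or_lt_of_le (h0 m) with hm | hm
    · have : u m * u (m+(d+1)+e) = 0 := by rw [← hm]; ring
      rw [this]; exact mul_nonneg (h0 _) (h0 _)
    rcases eq_or_lt_of_le (h0 (m+(d+1)+e)) with hM | hM
    · have : u m * u (m+(d+1)+e) = 0 := by rw [← hM]; ring
      rw [this]; exact mul_nonneg (h0 _) (h0 _)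
    have hmd : 0 < u (m+d) := hpos m (m+d) (m+(d+1)+e) (by omega) (by omega) hm hM
    have hmde : 0 < u (m+d+e) := hpos m (m+d+e) (m+(d+1)+e) (by omega) (by omega) hm hM
    have step := u_lc_step u h0 hlc hpos (m+d) e
    have key := mul_le_mul ih step (mul_nonneg (h0 _) (h0 _)) (mul_nonneg (h0 _) (h0 _))
    refine le_of_mul_le_mul_right ?_ (mul_pos hmd hmde)
    calc u m * u (m+(d+1)+e) * (u (m+d) * u (m+d+e))
        = u m * u (m+d+e) * (u (m+d) * u (m+d+e+1)) := by
          have : m+(d+1)+e = m+d+e+1 := by omega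
          rw [this]; ring
      _ ≤ u (m+d) * u (m+e) * (u (m+d+1) * u (m+d+e)) := key
      _ = u (m+(d+1)) * u (m+e) * (u (m+d) * u (m+d+e)) := by
          have : m+(d+1) = m+d+1 := by omega
          rw [this]; ring

lemma p_rr2 (ν : ℕ → ℝ) (hν0 : ∀ i, 0 ≤ ν i)
    (hniz : ∀ a b c : ℕ, a ≤ b → b ≤ c → 0 < ν a → 0 < ν c → 0 < ν b)
    (hslc : ∀ i : ℕ, 1 ≤ i → (i : ℝ) * ν i ^ 2 ≥ ((i : ℝ) + 1) * ν (i - 1) * ν (i + 1))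
    (α : ℝ) (hα0 : 0 < α) (hα1 : α < 1)
    (p : ℕ → ℕ → ℝ)
    (hp : ∀ k l, p k l = ν (k + l) * ((k + l).choose k : ℝ) * α ^ k * (1 - α) ^ l) :
    ∀ k l d e, p k l * p (k+d) (l+e) ≤ p k (l+e) * p (k+d) l := by
  set u : ℕ → ℝ := fun n => ν n * (n.factorial : ℝ) with hu
  have hfacpos : ∀ n : ℕ, (0:ℝ) < (n.factorial : ℝ) := fun n => by
    exact_mod_cast n.factorial_pos
  have hu0 : ∀ i, 0 ≤ u i := fun i => mul_nonneg (hν0 i) (hfacpos i).le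
  have hupos : ∀ a b c : ℕ, a ≤ b → b ≤ c → 0 < u a → 0 < u c → 0 < u b := by
    intro a b c hab hbc ha hc
    have hνa : 0 < ν a := by
      by_contra h
      have : ν a = 0 := le_antisymm (not_lt.mp h) (hν0 a)
      simp [hu, this] at ha
    have hνc : 0 < ν c := by
      by_contra h
      have : ν c = 0 := le_antisymm (not_lt.mp h) (hν0 c)
      simp [hu, this] at hc
    exact mul_pos (hniz a b c hab hbc hνa hνc) (hfacpos b)
  have hulc : ∀ i, u i * u (i+2) ≤ u (i+1)^2 := by
    intro i
    have h := hslc (i+1) (by omega)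
    have hi : (i+1) - 1 = i := by omega
    rw [hi] at h
    push_cast at h
    have hii : i + 1 + 1 = i + 2 := by omega
    rw [hii] at h
    have hf1 : ((i+1).factorial : ℝ) = ((i:ℝ)+1) * (i.factorial : ℝ) := by
      push_cast [Nat.factorial_succ]; ring
    have hf2 : ((i+2).factorial : ℝ) = ((i:ℝ)+2) * (((i:ℝ)+1) * (i.factorial : ℝ)) := by
      have : i + 2 = (i+1) + 1 := by omega
      rw [this]
      push_cast [Nat.factorial_succ]; ring
    simp only [hu, hf1, hf2]
    have hfp := hfacpos i
    nlinarith [mul_le_mul_of_nonneg_left h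
      (show (0:ℝ) ≤ (i.factorial:ℝ)^2*((i:ℝ)+1) by positivity)]
  have hquad := u_lc_quad u hu0 hulc hupos
  -- key factorial identity
  have hpu : ∀ k l : ℕ, p k l * ((k.factorial : ℝ) * (l.factorial : ℝ))
      = u (k+l) * α^k * (1-α)^l := by
    intro k l
    have hc : ((k+l).choose k * k.factorial * ((k+l) - k).factorial) = (k+l).factorial :=
      Nat.choose_mul_factorial_mul_factorial (Nat.le_add_right k l)
    have hkl : (k+l) - k = l := by omega
    rw [hkl] at hc
    have hcr : (((k+l).choose k : ℝ)) * (k.factorial : ℝ) * (l.factorial : ℝ)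
        = ((k+l).factorial : ℝ) := by exact_mod_cast congrArg (Nat.cast (R := ℝ)) hc
    rw [hp]
    simp only [hu]
    linear_combination (ν (k+l) * α^k * (1-α)^l) * hcr
  intro k l d e
  have quad := hquad (k+l) d e
  set K : ℝ := (k.factorial : ℝ) * (l.factorial : ℝ) * ((k+d).factorial : ℝ)
      * ((l+e).factorial : ℝ) with hK
  have hKpos : 0 < K := by rw [hK]; positivity
  have h1 := hpu k l
  have h2 := hpu (k+d) (l+e)
  have h3 := hpu k (l+e)
  have h4 := hpu (k+d) l
  have hi1 : k+d+(l+e) = (k+l)+d+e := by omega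
  have hi2 : k+(l+e) = (k+l)+e := by omega
  have hi3 : k+d+l = (k+l)+d := by omega
  rw [hi1] at h2; rw [hi2] at h3; rw [hi3] at h4
  refine le_of_mul_le_mul_right ?_ hKpos
  calc p k l * p (k+d) (l+e) * K
      = (p k l * ((k.factorial : ℝ) * (l.factorial : ℝ)))
        * (p (k+d) (l+e) * (((k+d).factorial : ℝ) * ((l+e).factorial : ℝ))) := by
        rw [hK]; ring
    _ = (u (k+l) * α^k * (1-α)^l) * (u ((k+l)+d+e) * α^(k+d) * (1-α)^(l+e)) := by
        rw [h1, h2]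
    _ = (u (k+l) * u ((k+l)+d+e)) * (α^k * α^(k+d) * (1-α)^l * (1-α)^(l+e)) := by ring
    _ ≤ (u ((k+l)+d) * u ((k+l)+e)) * (α^k * α^(k+d) * (1-α)^l * (1-α)^(l+e)) := by
        have hβ : (0:ℝ) ≤ 1 - α := by linarith
        have hX : (0:ℝ) ≤ α^k * α^(k+d) * (1-α)^l * (1-α)^(l+e) :=
          mul_nonneg (mul_nonneg (mul_nonneg (pow_nonneg hα0.le k)
            (pow_nonneg hα0.le (k+d))) (pow_nonneg hβ l)) (pow_nonneg hβ (l+e))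
        exact mul_le_mul_of_nonneg_right quad hX
    _ = (u ((k+l)+e) * α^k * (1-α)^(l+e)) * (u ((k+l)+d) * α^(k+d) * (1-α)^l) := by ring
    _ = (p k (l+e) * ((k.factorial : ℝ) * ((l+e).factorial : ℝ)))
        * (p (k+d) l * (((k+d).factorial : ℝ) * (l.factorial : ℝ))) := by rw [h3, h4]
    _ = p k (l+e) * p (k+d) l * K := by rw [hK]; ring

/-- If `ν` is a strongly log-concave probability distribution on `ℕ` with no
internal zeros, `α ∈ (0,1)`, `Z ∼ ν`, `X ∼ Bin(Z,α)`, `Y = Z - X` (joint law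
`p k l = ν(k+l)·C(k+l,k)·α^k·(1-α)^l`), then `X` and `Y` are negatively
correlated: `P(X ≥ s, Y ≥ t) ≤ P(X ≥ s)·P(Y ≥ t)` for all `s, t`. -/
theorem slc_implies_neg_correlation (ν : ℕ → ℝ) (hν0 : ∀ i, 0 ≤ ν i)
    (hν1 : ∑' i, ν i = 1)
    (hniz : ∀ a b c : ℕ, a ≤ b → b ≤ c → 0 < ν a → 0 < ν c → 0 < ν b)
    (hslc : ∀ i : ℕ, 1 ≤ i → (i : ℝ) * ν i ^ 2 ≥ ((i : ℝ) + 1) * ν (i - 1) * ν (i + 1))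
    (α : ℝ) (hα0 : 0 < α) (hα1 : α < 1)
    (p : ℕ → ℕ → ℝ)
    (hp : ∀ k l, p k l = ν (k + l) * ((k + l).choose k : ℝ) * α ^ k * (1 - α) ^ l)
    (s t : ℕ) :
    (∑' q : ℕ × ℕ, if s ≤ q.1 ∧ t ≤ q.2 then p q.1 q.2 else 0) ≤
      (∑' q : ℕ × ℕ, if s ≤ q.1 then p q.1 q.2 else 0) *
        (∑' q : ℕ × ℕ, if t ≤ q.2 then p q.1 q.2 else 0) := by
  classical
  have hβ0 : (0:ℝ) < 1 - α := by linarith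
  have hp0 : ∀ k l, 0 ≤ p k l := by
    intro k l
    rw [hp]
    exact mul_nonneg (mul_nonneg (mul_nonneg (hν0 _) (Nat.cast_nonneg _))
      (pow_nonneg hα0.le _)) (pow_nonneg hβ0.le _)
  have key := p_rr2 ν hν0 hniz hslc α hα0 hα1 p hp
  have hνs : Summable ν := by
    by_contra h
    rw [tsum_eq_zero_of_not_summable h] at hν1
    norm_num at hν1
  -- antidiagonal sums
  have hanti : ∀ n : ℕ, ∑ q ∈ Finset.HasAntidiagonal.antidiagonal n, p q.1 q.2 = ν n := by
    intro n
    rw [Finset.Nat.sum_antidiagonal_eq_sum_range_succ_mk]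
    have h1 : ∀ k ∈ Finset.range (n+1),
        p k (n-k) = ν n * (α^k * (1-α)^(n-k) * ((n.choose k : ℝ))) := by
      intro k hk
      have hkn : k + (n - k) = n := by rw [Finset.mem_range] at hk; omega
      rw [hp, hkn]; ring
    rw [Finset.sum_congr rfl h1, ← Finset.mul_sum, ← add_pow]
    have : α + (1 - α) = 1 := by ring
    rw [this, one_pow, mul_one]
  have hdisj : ∀ (S : Finset ℕ),
      Set.PairwiseDisjoint (S : Set ℕ) (fun n => Finset.HasAntidiagonal.antidiagonal n) := by
    intro S n _ m _ hnm
    rw [Function.onFun, Finset.disjoint_left]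
    intro q hq hq'
    rw [Finset.HasAntidiagonal.mem_antidiagonal] at hq hq'
    exact hnm (hq ▸ hq')
  have hbiu : ∀ N : ℕ, ∑ q ∈ (Finset.range N).biUnion (fun n => Finset.HasAntidiagonal.antidiagonal n),
      p q.1 q.2 = ∑ n ∈ Finset.range N, ν n := by
    intro N
    rw [Finset.sum_biUnion (hdisj _)]
    exact Finset.sum_congr rfl fun n _ => hanti n
  have hbound : ∀ F : Finset (ℕ × ℕ), ∑ q ∈ F, p q.1 q.2 ≤ 1 := by
    intro F
    set N := F.sup (fun q => q.1 + q.2) with hN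
    have hsub : F ⊆ (Finset.range (N+1)).biUnion (fun n => Finset.HasAntidiagonal.antidiagonal n) := by
      intro q hq
      rw [Finset.mem_biUnion]
      exact ⟨q.1 + q.2, Finset.mem_range.mpr (Nat.lt_succ_of_le (Finset.le_sup (f := fun q : ℕ × ℕ => q.1 + q.2) hq)),
        Finset.HasAntidiagonal.mem_antidiagonal.mpr rfl⟩
    calc ∑ q ∈ F, p q.1 q.2
        ≤ ∑ q ∈ (Finset.range (N+1)).biUnion (fun n => Finset.HasAntidiagonal.antidiagonal n), p q.1 q.2 :=
          Finset.sum_le_sum_of_subset_of_nonneg hsub (fun q _ _ => hp0 q.1 q.2)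
      _ = ∑ n ∈ Finset.range (N+1), ν n := hbiu _
      _ ≤ ∑' n, ν n := Summable.sum_le_tsum _ (fun n _ => hν0 n) hνs
      _ = 1 := hν1
  have hPsum : Summable (fun q : ℕ × ℕ => p q.1 q.2) :=
    summable_of_sum_le (fun q => hp0 q.1 q.2) hbound
  obtain ⟨hsec, hmarg⟩ :=
    (summable_prod_of_nonneg (fun q => hp0 q.1 q.2)).mp hPsum
  -- basic functions
  set a : ℕ → ℝ := fun k => ∑' l, if t ≤ l then p k l else 0 with hadef
  set b : ℕ → ℝ := fun k => ∑ l ∈ Finset.range t, p k l with hbdef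
  set m : ℕ → ℝ := fun k => ∑' l, p k l with hmdef
  have ha_suml : ∀ k, Summable (fun l => if t ≤ l then p k l else 0) := by
    intro k
    refine Summable.of_nonneg_of_le (fun l => ?_) (fun l => ?_) (hsec k) <;>
      by_cases h : t ≤ l <;> simp [h, hp0]
  have hc_suml : ∀ k, Summable (fun l => if t ≤ l then 0 else p k l) := by
    intro k
    refine Summable.of_nonneg_of_le (fun l => ?_) (fun l => ?_) (hsec k) <;>
      by_cases h : t ≤ l <;> simp [h, hp0]
  have ha0 : ∀ k, 0 ≤ a k := fun k => tsum_nonneg (fun l => by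
    by_cases h : t ≤ l <;> simp [h, hp0])
  have hb0 : ∀ k, 0 ≤ b k := fun k => Finset.sum_nonneg (fun l _ => hp0 k l)
  have hm_eq : ∀ k, m k = a k + b k := by
    intro k
    have hsplit : ∀ l, p k l = (if t ≤ l then p k l else 0) + (if t ≤ l then 0 else p k l) := by
      intro l; by_cases h : t ≤ l <;> simp [h]
    calc m k = ∑' l, ((if t ≤ l then p k l else 0) + (if t ≤ l then 0 else p k l)) :=
          tsum_congr hsplit
      _ = a k + ∑' l, (if t ≤ l then 0 else p k l) := Summable.tsum_add (ha_suml k) (hc_suml k)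
      _ = a k + b k := by
          congr 1
          rw [tsum_eq_sum (s := Finset.range t)
            (fun l hl => by rw [Finset.mem_range, not_lt] at hl; simp [hl])]
          exact Finset.sum_congr rfl fun l hl => by
            rw [Finset.mem_range] at hl
            simp [Nat.not_le.mpr hl]
  have ha_le_m : ∀ k, a k ≤ m k := fun k =>
    Summable.tsum_le_tsum (fun l => by by_cases h : t ≤ l <;> simp [h, hp0]) (ha_suml k) (hsec k)
  have hsa : Summable a := Summable.of_nonneg_of_le ha0 ha_le_m hmarg
  have hsb : Summable b := Summable.of_nonneg_of_le hb0
    (fun k => by have h1 := hm_eq k; have h2 := ha0 k; linarith) hmarg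
  have hita : Summable (fun k => if s ≤ k then a k else 0) := by
    refine Summable.of_nonneg_of_le (fun k => ?_) (fun k => ?_) hsa <;>
      by_cases h : s ≤ k <;> simp [h, ha0]
  have hitb : Summable (fun k => if s ≤ k then b k else 0) := by
    refine Summable.of_nonneg_of_le (fun k => ?_) (fun k => ?_) hsb <;>
      by_cases h : s ≤ k <;> simp [h, hb0]
  have hitm : Summable (fun k => if s ≤ k then m k else 0) := by
    refine Summable.of_nonneg_of_le (fun k => ?_) (fun k => ?_) hmarg <;>
      by_cases h : s ≤ k <;> simp [h]
    · exact le_trans (ha0 k) (ha_le_m k)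
    · exact le_trans (ha0 k) (ha_le_m k)
  have hit2 : Summable (fun k => if s ≤ k then 0 else a k) := by
    refine Summable.of_nonneg_of_le (fun k => ?_) (fun k => ?_) hsa <;>
      by_cases h : s ≤ k <;> simp [h, ha0]
  -- rewriting the three tsums
  have hLHS : (∑' q : ℕ × ℕ, if s ≤ q.1 ∧ t ≤ q.2 then p q.1 q.2 else 0)
      = ∑' k, (if s ≤ k then a k else 0) := by
    have hs1 : Summable (fun q : ℕ × ℕ => if s ≤ q.1 ∧ t ≤ q.2 then p q.1 q.2 else 0) := by
      refine Summable.of_nonneg_of_le (fun q => ?_) (fun q => ?_) hPsum <;>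
        by_cases h : s ≤ q.1 ∧ t ≤ q.2 <;> simp [h, hp0]
    have hs2 : ∀ k, Summable (fun l => if s ≤ k ∧ t ≤ l then p k l else 0) := by
      intro k
      refine Summable.of_nonneg_of_le (fun l => ?_) (fun l => ?_) (hsec k) <;>
        by_cases h : s ≤ k ∧ t ≤ l <;> simp [h, hp0]
    rw [Summable.tsum_prod' hs1 hs2]
    refine tsum_congr fun k => ?_
    by_cases hk : s ≤ k
    · simp only [hk, true_and, if_true, hadef]
    · simp [hk]
  have hSM : (∑' q : ℕ × ℕ, if s ≤ q.1 then p q.1 q.2 else 0)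
      = ∑' k, (if s ≤ k then m k else 0) := by
    have hs1 : Summable (fun q : ℕ × ℕ => if s ≤ q.1 then p q.1 q.2 else 0) := by
      refine Summable.of_nonneg_of_le (fun q => ?_) (fun q => ?_) hPsum <;>
        by_cases h : s ≤ q.1 <;> simp [h, hp0]
    have hs2 : ∀ k, Summable (fun l => if s ≤ k then p k l else 0) := by
      intro k
      refine Summable.of_nonneg_of_le (fun l => ?_) (fun l => ?_) (hsec k) <;>
        by_cases h : s ≤ k <;> simp [h, hp0]
    rw [Summable.tsum_prod' hs1 hs2]
    refine tsum_congr fun k => ?_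
    by_cases hk : s ≤ k <;> simp [hk, hmdef]
  have hTA : (∑' q : ℕ × ℕ, if t ≤ q.2 then p q.1 q.2 else 0) = ∑' k, a k := by
    have hs1 : Summable (fun q : ℕ × ℕ => if t ≤ q.2 then p q.1 q.2 else 0) := by
      refine Summable.of_nonneg_of_le (fun q => ?_) (fun q => ?_) hPsum <;>
        by_cases h : t ≤ q.2 <;> simp [h, hp0]
    rw [Summable.tsum_prod' hs1 (fun k => ha_suml k)]
  rw [hLHS, hSM, hTA]
  -- named quantities
  set SA := ∑' k, (if s ≤ k then a k else 0) with hSA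
  set SB := ∑' k, (if s ≤ k then b k else 0) with hSB
  set SMv := ∑' k, (if s ≤ k then m k else 0) with hSMv
  set S'A := ∑ k ∈ Finset.range s, a k with hS'A
  set S'B := ∑ k ∈ Finset.range s, b k with hS'B
  -- T ≥ 1
  have hT1 : 1 ≤ ∑' k, m k := by
    have hle : ∀ N : ℕ, ∑ n ∈ Finset.range N, ν n ≤ ∑' q : ℕ × ℕ, p q.1 q.2 := by
      intro N
      rw [← hbiu N]
      exact Summable.sum_le_tsum _ (fun q _ => hp0 q.1 q.2) hPsum
    have hten := hνs.hasSum.tendsto_sum_nat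
    rw [hν1] at hten
    have h1 := le_of_tendsto hten (Filter.Eventually.of_forall hle)
    rwa [Summable.tsum_prod' hPsum hsec] at h1
  -- decompositions
  have hTdec : ∑' k, m k = SMv + (S'A + S'B) := by
    have h1 : ∀ k, m k = (if s ≤ k then m k else 0) + (if s ≤ k then 0 else m k) := by
      intro k; by_cases h : s ≤ k <;> simp [h]
    have hitm2 : Summable (fun k => if s ≤ k then 0 else m k) := by
      refine Summable.of_nonneg_of_le (fun k => ?_) (fun k => ?_) hmarg <;>
        by_cases h : s ≤ k <;> simp [h]
      · exact le_trans (ha0 k) (ha_le_m k)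
      · exact le_trans (ha0 k) (ha_le_m k)
    calc ∑' k, m k = ∑' k, ((if s ≤ k then m k else 0) + (if s ≤ k then 0 else m k)) :=
          tsum_congr h1
      _ = SMv + ∑' k, (if s ≤ k then 0 else m k) := Summable.tsum_add hitm hitm2
      _ = SMv + (S'A + S'B) := by
          congr 1
          rw [tsum_eq_sum (s := Finset.range s)
            (fun k hk => by rw [Finset.mem_range, not_lt] at hk; simp [hk])]
          rw [hS'A, hS'B, ← Finset.sum_add_distrib]
          exact Finset.sum_congr rfl fun k hk => by
            rw [Finset.mem_range] at hk
            simp [Nat.not_le.mpr hk, hm_eq k]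
  have hTAdec : ∑' k, a k = SA + S'A := by
    have h1 : ∀ k, a k = (if s ≤ k then a k else 0) + (if s ≤ k then 0 else a k) := by
      intro k; by_cases h : s ≤ k <;> simp [h]
    calc ∑' k, a k = ∑' k, ((if s ≤ k then a k else 0) + (if s ≤ k then 0 else a k)) :=
          tsum_congr h1
      _ = SA + ∑' k, (if s ≤ k then 0 else a k) := Summable.tsum_add hita hit2
      _ = SA + S'A := by
          congr 1
          rw [tsum_eq_sum (s := Finset.range s)
            (fun k hk => by rw [Finset.mem_range, not_lt] at hk; simp [hk])]
          exact Finset.sum_congr rfl fun k hk => by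
            rw [Finset.mem_range] at hk
            simp [Nat.not_le.mpr hk]
  have hSMdec : SMv = SA + SB := by
    calc SMv = ∑' k, ((if s ≤ k then a k else 0) + (if s ≤ k then b k else 0)) := by
          refine tsum_congr fun k => ?_
          by_cases h : s ≤ k <;> simp [h, hm_eq k]
      _ = SA + SB := Summable.tsum_add hita hitb
  -- the key cross inequality: a k * b k' ≤ a k' * b k for k' ≤ k
  have hab : ∀ k' k : ℕ, k' ≤ k → a k * b k' ≤ a k' * b k := by
    intro k' k hk'
    have hterm : ∀ l, l < t → a k * p k' l ≤ a k' * p k l := by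
      intro l hl
      have h1 : a k * p k' l = ∑' l', (if t ≤ l' then p k l' else 0) * p k' l := by
        rw [hadef]; exact (tsum_mul_right).symm
      have h2 : a k' * p k l = ∑' l', (if t ≤ l' then p k' l' else 0) * p k l := by
        rw [hadef]; exact (tsum_mul_right).symm
      rw [h1, h2]
      refine Summable.tsum_le_tsum (fun l' => ?_) ((ha_suml k).mul_right _) ((ha_suml k').mul_right _)
      by_cases hl' : t ≤ l'
      · simp only [hl', if_true]
        have hll' : l ≤ l' := le_trans (Nat.le_of_lt hl) hl'
        have := key k' l (k - k') (l' - l)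
        have e1 : k' + (k - k') = k := by omega
        have e2 : l + (l' - l) = l' := by omega
        rw [e1, e2] at this
        nlinarith [this]
      · simp [hl']
    calc a k * b k' = ∑ l ∈ Finset.range t, a k * p k' l := by
          rw [hbdef]; exact Finset.mul_sum _ _ _
      _ ≤ ∑ l ∈ Finset.range t, a k' * p k l :=
          Finset.sum_le_sum fun l hl => hterm l (Finset.mem_range.mp hl)
      _ = a k' * b k := by rw [hbdef]; exact (Finset.mul_sum _ _ _).symm
  have key4 : SA * S'B ≤ SB * S'A := by
    have h1 : SA * S'B = ∑' k, (if s ≤ k then a k else 0) * S'B := tsum_mul_right.symm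
    have h2 : SB * S'A = ∑' k, (if s ≤ k then b k else 0) * S'A := tsum_mul_right.symm
    rw [h1, h2]
    refine Summable.tsum_le_tsum (fun k => ?_) (hita.mul_right _) (hitb.mul_right _)
    by_cases hk : s ≤ k
    · simp only [hk, if_true]
      calc a k * S'B = ∑ k' ∈ Finset.range s, a k * b k' := by
            rw [hS'B]; exact Finset.mul_sum _ _ _
        _ ≤ ∑ k' ∈ Finset.range s, a k' * b k := by
            refine Finset.sum_le_sum fun k' hk' => ?_
            exact hab k' k (le_trans (Nat.le_of_lt (Finset.mem_range.mp hk')) hk)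
        _ = b k * S'A := by
            rw [hS'A, Finset.mul_sum]
            exact Finset.sum_congr rfl fun k' _ => mul_comm _ _
    · simp [hk]
  -- final assembly
  have hSA0 : 0 ≤ SA := tsum_nonneg fun k => by by_cases h : s ≤ k <;> simp [h, ha0]
  have h5 : SA * 1 ≤ SA * (∑' k, m k) := mul_le_mul_of_nonneg_left hT1 hSA0
  rw [hTdec] at h5
  rw [hTAdec, hSMdec]
  nlinarith [h5, key4]
end

section
/- Let G be a finite multigraph on vertex set V and for a,b ∈ ℕ^V let N(a,b) be the number of orientations of G with d⁺(x) ≥ a_x and d⁻(x) ≥ b_x for all x. If a + b = r + s (componentwise), then N(a,b)·N(r,s) ≥ N(a∨r, b∧s)·N(a∧r, b∨s), where ∨ and ∧ denote componentwise max and min. -/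
open Finset
open scoped Classical

set_option linter.unusedSectionVars false
set_option maxHeartbeats 1600000

section Basic
variable {V : Type*} {E : Type*} [Fintype V] [Fintype E] (fst snd : E → V)

def tl (o : E → Bool) (e : E) : V := bif o e then fst e else snd e
def hd (o : E → Bool) (e : E) : V := bif o e then snd e else fst e

noncomputable def dpl (o : E → Bool) (x : V) : ℕ := (univ.filter (fun e => tl fst snd o e = x)).card
noncomputable def dmi (o : E → Bool) (x : V) : ℕ := (univ.filter (fun e => hd fst snd o e = x)).card

lemma tl_mem (o : E → Bool) (e : E) : tl fst snd o e = fst e ∨ tl fst snd o e = snd e := by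
  unfold tl; cases o e <;> simp

lemma tl_hd_cases (o : E → Bool) (e : E) :
    (tl fst snd o e = fst e ∧ hd fst snd o e = snd e) ∨
    (tl fst snd o e = snd e ∧ hd fst snd o e = fst e) := by
  unfold tl hd; cases o e <;> simp

/-- degree is orientation independent -/
lemma dpl_add_dmi (o o' : E → Bool) (x : V) :
    dpl fst snd o x + dmi fst snd o x = dpl fst snd o' x + dmi fst snd o' x := by
  unfold dpl dmi
  rw [Finset.card_filter, Finset.card_filter, Finset.card_filter, Finset.card_filter,
    ← Finset.sum_add_distrib, ← Finset.sum_add_distrib]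
  apply Finset.sum_congr rfl
  intro e _
  rcases tl_hd_cases fst snd o e with ⟨h1, h2⟩ | ⟨h1, h2⟩ <;>
    rcases tl_hd_cases fst snd o' e with ⟨h3, h4⟩ | ⟨h3, h4⟩ <;>
    rw [h1, h2, h3, h4] <;> by_cases hf : fst e = x <;> by_cases hs : snd e = x <;>
    simp [hf, hs]

/-- flip a single edge -/
noncomputable def flipE (o : E → Bool) (e₀ : E) : E → Bool := fun e => if e = e₀ then !(o e) else o e

lemma card_filter_eq_single (P : E → Prop) (e₀ : E) :
    (univ.filter (fun e => P e ∧ e = e₀)).card = if P e₀ then 1 else 0 := by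
  by_cases h : P e₀
  · rw [if_pos h]
    have : univ.filter (fun e => P e ∧ e = e₀) = {e₀} := by
      ext e; simp only [mem_filter, mem_univ, true_and, mem_singleton]
      constructor
      · rintro ⟨_, rfl⟩; rfl
      · rintro rfl; exact ⟨h, rfl⟩
    rw [this, card_singleton]
  · rw [if_neg h]
    rw [Finset.card_eq_zero]
    ext e; simp only [mem_filter, mem_univ, true_and, Finset.notMem_empty, iff_false]
    rintro ⟨hP, rfl⟩; exact h hP

lemma card_filter_split (P : E → Prop) (e₀ : E) :
    (univ.filter P).card
      = (univ.filter (fun e => P e ∧ e ≠ e₀)).card + (if P e₀ then 1 else 0) := by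
  have hu : univ.filter P
      = (univ.filter (fun e => P e ∧ e ≠ e₀)) ∪ (univ.filter (fun e => P e ∧ e = e₀)) := by
    ext e
    simp only [mem_filter, mem_univ, true_and, mem_union]
    tauto
  rw [hu, Finset.card_union_of_disjoint, card_filter_eq_single]
  rw [Finset.disjoint_left]
  intro e he he'
  simp only [mem_filter, mem_univ, true_and] at he he'
  exact he.2 he'.2

lemma tl_flipE (o : E → Bool) (e₀ e : E) (h : e ≠ e₀) : tl fst snd (flipE o e₀) e = tl fst snd o e := by
  unfold tl flipE; simp [h]
lemma hd_flipE (o : E → Bool) (e₀ e : E) (h : e ≠ e₀) : hd fst snd (flipE o e₀) e = hd fst snd o e := by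
  unfold hd flipE; simp [h]
lemma tl_flipE_self (o : E → Bool) (e₀ : E) : tl fst snd (flipE o e₀) e₀ = hd fst snd o e₀ := by
  unfold tl hd flipE; cases h : o e₀ <;> simp [h]
lemma hd_flipE_self (o : E → Bool) (e₀ : E) : hd fst snd (flipE o e₀) e₀ = tl fst snd o e₀ := by
  unfold tl hd flipE; cases h : o e₀ <;> simp [h]

lemma dpl_flipE (o : E → Bool) (e₀ : E) (y : V) :
    dpl fst snd (flipE o e₀) y + (if tl fst snd o e₀ = y then 1 else 0)
      = dpl fst snd o y + (if hd fst snd o e₀ = y then 1 else 0) := by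
  unfold dpl
  rw [card_filter_split (fun e => tl fst snd (flipE o e₀) e = y) e₀,
      card_filter_split (fun e => tl fst snd o e = y) e₀]
  have h1 : (univ.filter (fun e => tl fst snd (flipE o e₀) e = y ∧ e ≠ e₀))
      = (univ.filter (fun e => tl fst snd o e = y ∧ e ≠ e₀)) := by
    apply filter_congr; intro e _
    constructor
    · rintro ⟨h, hne⟩; exact ⟨by rwa [tl_flipE fst snd o e₀ e hne] at h, hne⟩
    · rintro ⟨h, hne⟩; exact ⟨by rwa [tl_flipE fst snd o e₀ e hne], hne⟩
  rw [h1, tl_flipE_self]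
  omega

lemma dmi_flipE (o : E → Bool) (e₀ : E) (y : V) :
    dmi fst snd (flipE o e₀) y + (if hd fst snd o e₀ = y then 1 else 0)
      = dmi fst snd o y + (if tl fst snd o e₀ = y then 1 else 0) := by
  unfold dmi
  rw [card_filter_split (fun e => hd fst snd (flipE o e₀) e = y) e₀,
      card_filter_split (fun e => hd fst snd o e = y) e₀]
  have h1 : (univ.filter (fun e => hd fst snd (flipE o e₀) e = y ∧ e ≠ e₀))
      = (univ.filter (fun e => hd fst snd o e = y ∧ e ≠ e₀)) := by
    apply filter_congr; intro e _
    constructor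
    · rintro ⟨h, hne⟩; exact ⟨by rwa [hd_flipE fst snd o e₀ e hne] at h, hne⟩
    · rintro ⟨h, hne⟩; exact ⟨by rwa [hd_flipE fst snd o e₀ e hne], hne⟩
  rw [h1, hd_flipE_self]
  omega

end Basic

section Paths
variable {V : Type*} {E : Type*} [Fintype V] [Fintype E] (fst snd : E → V)

def IsPath (o : E → Bool) : List E → V → V → Prop
  | [], x, z => x = z
  | e :: l, x, z => tl fst snd o e = x ∧ IsPath o l (hd fst snd o e) z

lemma isPath_append (o : E → Bool) (l₁ l₂ : List E) (x z : V) :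
    IsPath fst snd o (l₁ ++ l₂) x z ↔ ∃ m, IsPath fst snd o l₁ x m ∧ IsPath fst snd o l₂ m z := by
  induction l₁ generalizing x with
  | nil =>
    simp only [List.nil_append, IsPath]
    constructor
    · intro h; exact ⟨x, rfl, h⟩
    · rintro ⟨m, rfl, h⟩; exact h
  | cons e l ih =>
    simp only [List.cons_append, IsPath]
    rw [ih]
    constructor
    · rintro ⟨h1, m, h2, h3⟩; exact ⟨m, ⟨h1, h2⟩, h3⟩
    · rintro ⟨m, ⟨h1, h2⟩, h3⟩; exact ⟨h1, m, h2, h3⟩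

lemma not_nodup_split {α : Type*} (l : List α) (h : ¬ l.Nodup) :
    ∃ (a : α) (l₁ l₂ l₃ : List α), l = l₁ ++ a :: (l₂ ++ a :: l₃) := by
  induction l with
  | nil => simp at h
  | cons b t ih =>
    by_cases hb : b ∈ t
    · obtain ⟨s, u, rfl⟩ := List.append_of_mem hb
      exact ⟨b, [], s, u, rfl⟩
    · have ht : ¬ t.Nodup := by
        intro hn; exact h (List.nodup_cons.mpr ⟨hb, hn⟩)
      obtain ⟨a, l₁, l₂, l₃, rfl⟩ := ih ht
      exact ⟨a, b :: l₁, l₂, l₃, rfl⟩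

lemma isPath_dedup (o : E → Bool) :
    ∀ (n : ℕ) (l : List E) (x z : V), l.length ≤ n → IsPath fst snd o l x z →
    ∃ l', l'.Nodup ∧ IsPath fst snd o l' x z := by
  intro n
  induction n with
  | zero =>
    intro l x z hl hp
    interval_cases hll : l.length
    · exact ⟨l, by cases l with | nil => simp | cons => simp at hll, hp⟩
  | succ n ih =>
    intro l x z hl hp
    by_cases hnd : l.Nodup
    · exact ⟨l, hnd, hp⟩
    · obtain ⟨a, l₁, l₂, l₃, rfl⟩ := not_nodup_split l hnd
      rw [isPath_append] at hp
      obtain ⟨m, hm1, hm2⟩ := hp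
      obtain ⟨ha, hrest⟩ := hm2
      rw [isPath_append] at hrest
      obtain ⟨m₂, _, hm3⟩ := hrest
      obtain ⟨ha2, htail⟩ := hm3
      have hnewpath : IsPath fst snd o (l₁ ++ a :: l₃) x z := by
        rw [isPath_append]
        exact ⟨m, hm1, ha, htail⟩
      apply ih (l₁ ++ a :: l₃) x z _ hnewpath
      have : (l₁ ++ a :: (l₂ ++ a :: l₃)).length ≤ n + 1 := hl
      simp only [List.length_append, List.length_cons] at this ⊢
      omega

/-- flip along a nodup path -/
lemma isPath_flip (o : E → Bool) (l : List E) (x z : V)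
    (hnd : l.Nodup) (hp : IsPath fst snd o l x z) :
    ∃ o' : E → Bool,
      (∀ y, dpl fst snd o' y + (if x = y then 1 else 0) = dpl fst snd o y + (if z = y then 1 else 0)) ∧
      (∀ y, dmi fst snd o' y + (if z = y then 1 else 0) = dmi fst snd o y + (if x = y then 1 else 0)) ∧
      (∀ e, e ∉ l → o' e = o e) := by
  induction l generalizing x with
  | nil =>
    cases hp
    exact ⟨o, fun y => rfl, fun y => rfl, fun e _ => rfl⟩
  | cons e l ih =>
    obtain ⟨hte, hp'⟩ := hp
    have hnd' : l.Nodup := (List.nodup_cons.mp hnd).2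
    have hel : e ∉ l := (List.nodup_cons.mp hnd).1
    obtain ⟨o₁, hdp1, hdm1, hagree⟩ := ih (hd fst snd o e) hnd' hp'
    have hoe : o₁ e = o e := hagree e hel
    refine ⟨flipE o₁ e, ?_, ?_, ?_⟩
    · intro y
      have hf := dpl_flipE fst snd o₁ e y
      have htl1 : tl fst snd o₁ e = tl fst snd o e := by unfold tl; rw [hoe]
      have hhd1 : hd fst snd o₁ e = hd fst snd o e := by unfold hd; rw [hoe]
      rw [htl1, hhd1, hte] at hf
      have h1 := hdp1 y
      omega
    · intro y
      have hf := dmi_flipE fst snd o₁ e y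
      have htl1 : tl fst snd o₁ e = tl fst snd o e := by unfold tl; rw [hoe]
      have hhd1 : hd fst snd o₁ e = hd fst snd o e := by unfold hd; rw [hoe]
      rw [htl1, hhd1, hte] at hf
      have h1 := hdm1 y
      omega
    · intro e' he'
      have h1 : e' ∉ l := fun h => he' (List.mem_cons_of_mem _ h)
      have h2 : e' ≠ e := fun h => he' (h ▸ (List.mem_cons_self : e ∈ e :: l))
      unfold flipE
      rw [if_neg h2]
      exact hagree e' h1

def Rch (o : E → Bool) (x z : V) : Prop :=
  Relation.ReflTransGen (fun y w => ∃ e, tl fst snd o e = y ∧ hd fst snd o e = w) x z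

lemma rch_path (o : E → Bool) (x z : V) (h : Rch fst snd o x z) :
    ∃ l, IsPath fst snd o l x z := by
  induction h using Relation.ReflTransGen.head_induction_on with
  | refl => exact ⟨[], rfl⟩
  | head hstep _ ih =>
    obtain ⟨l, hl⟩ := ih
    obtain ⟨e, he1, he2⟩ := hstep
    exact ⟨e :: l, he1, he2 ▸ hl⟩

end Paths

section EX
variable {V : Type*} {E : Type*} [Fintype V] [Fintype E] (fst snd : E → V)

lemma sum_dmi_eq (o : E → Bool) (R : Finset V) :
    ∑ z ∈ R, dmi fst snd o z = (univ.filter (fun e => hd fst snd o e ∈ R)).card := by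
  rw [Finset.card_eq_sum_card_fiberwise (f := hd fst snd o) (t := R)
    (fun e he => by simpa using (Finset.mem_filter.mp he).2)]
  apply Finset.sum_congr rfl
  intro z hz
  unfold dmi
  congr 1
  ext e
  simp only [mem_filter, mem_univ, true_and]
  constructor
  · intro h2; refine ⟨?_, h2⟩; rw [h2]; exact hz
  · rintro ⟨-, h2⟩; exact h2

lemma sum_dpl_eq (o : E → Bool) (R : Finset V) :
    ∑ z ∈ R, dpl fst snd o z = (univ.filter (fun e => tl fst snd o e ∈ R)).card := by
  rw [Finset.card_eq_sum_card_fiberwise (f := tl fst snd o) (t := R)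
    (fun e he => by simpa using (Finset.mem_filter.mp he).2)]
  apply Finset.sum_congr rfl
  intro z hz
  unfold dpl
  congr 1
  ext e
  simp only [mem_filter, mem_univ, true_and]
  constructor
  · intro h2; refine ⟨?_, h2⟩; rw [h2]; exact hz
  · rintro ⟨-, h2⟩; exact h2

/-- Existence: a witness for the sorted thresholds yields a witness for the mixed ones. -/
lemma EX (p q : V → ℤ) (o₀ : E → Bool)
    (h₀ : ∀ x, max (p x) (q x) ≤ (dpl fst snd o₀ x : ℤ) ∧ min (p x) (q x) ≤ (dmi fst snd o₀ x : ℤ)) :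
    ∃ o : E → Bool, ∀ x, p x ≤ (dpl fst snd o x : ℤ) ∧ q x ≤ (dmi fst snd o x : ℤ) := by
  -- main induction on total deficiency
  suffices h : ∀ (n : ℕ) (o : E → Bool),
      (∀ x, p x ≤ (dpl fst snd o x : ℤ) ∧ min (p x) (q x) ≤ (dmi fst snd o x : ℤ)) →
      (∑ x, (q x - (dmi fst snd o x : ℤ)).toNat) ≤ n →
      ∃ o' : E → Bool, ∀ x, p x ≤ (dpl fst snd o' x : ℤ) ∧ q x ≤ (dmi fst snd o' x : ℤ) by
    apply h (∑ x, (q x - (dmi fst snd o₀ x : ℤ)).toNat) o₀ _ le_rfl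
    intro x
    exact ⟨le_trans (le_max_left _ _) (h₀ x).1, (h₀ x).2⟩
  intro n
  induction n with
  | zero =>
    intro o hK hT
    refine ⟨o, fun x => ⟨(hK x).1, ?_⟩⟩
    have := Finset.sum_eq_zero_iff.mp (Nat.le_zero.mp hT) x (mem_univ x)
    omega
  | succ n ih =>
    intro o hK hT
    by_cases hdone : ∀ x, q x ≤ (dmi fst snd o x : ℤ)
    · exact ⟨o, fun x => ⟨(hK x).1, hdone x⟩⟩
    push_neg at hdone
    obtain ⟨x₀, hx₀⟩ := hdone
    set R : Finset V := univ.filter (Rch fst snd o x₀) with hR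
    have hx₀R : x₀ ∈ R := by
      simp only [hR, mem_filter, mem_univ, true_and]
      exact Relation.ReflTransGen.refl
    by_cases hsur : ∃ z ∈ R, (q z : ℤ) < (dmi fst snd o z : ℤ)
    · -- augment along a path
      obtain ⟨z, hzR, hzs⟩ := hsur
      have hreach : Rch fst snd o x₀ z := by
        simpa only [hR, mem_filter, mem_univ, true_and] using hzR
      obtain ⟨l, hl⟩ := rch_path fst snd o x₀ z hreach
      obtain ⟨l', hnd, hl'⟩ := isPath_dedup fst snd o l.length l x₀ z le_rfl hl
      obtain ⟨o', hdp', hdm', _⟩ := isPath_flip fst snd o l' x₀ z hnd hl'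
      have hzx₀ : z ≠ x₀ := by
        intro h; rw [h] at hzs; omega
      have hA : ∀ y, y ≠ x₀ → y ≠ z →
          dpl fst snd o' y = dpl fst snd o y ∧ dmi fst snd o' y = dmi fst snd o y := by
        intro y hy1 hy2
        have h1 := hdp' y
        have h2 := hdm' y
        rw [if_neg (fun hc : x₀ = y => hy1 hc.symm), if_neg (fun hc : z = y => hy2 hc.symm)] at h1 h2
        omega
      have hB : dpl fst snd o' x₀ + 1 = dpl fst snd o x₀ ∧
          dmi fst snd o' x₀ = dmi fst snd o x₀ + 1 := by
        have h1 := hdp' x₀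
        have h2 := hdm' x₀
        rw [if_pos rfl, if_neg (fun hc : z = x₀ => hzx₀ hc)] at h1 h2
        omega
      have hC : dpl fst snd o' z = dpl fst snd o z + 1 ∧
          dmi fst snd o' z + 1 = dmi fst snd o z := by
        have h1 := hdp' z
        have h2 := hdm' z
        rw [if_pos rfl, if_neg (fun hc : x₀ = z => hzx₀ hc.symm)] at h1 h2
        omega
      -- degree bookkeeping
      have hdeg : ∀ y, dpl fst snd o y + dmi fst snd o y
          = dpl fst snd o₀ y + dmi fst snd o₀ y := fun y => dpl_add_dmi fst snd o o₀ y
      have hpq : ∀ y, p y + q y ≤ ((dpl fst snd o₀ y : ℤ) + (dmi fst snd o₀ y : ℤ)) := by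
        intro y
        have h1 := (h₀ y).1
        have h2 := (h₀ y).2
        have : max (p y) (q y) + min (p y) (q y) = p y + q y := by omega
        omega
      apply ih o'
      · intro y
        have h2 := (hK y).1
        have h2' := (hK y).2
        by_cases hy : y = x₀
        · subst hy
          have h3 := hpq y
          have h4 := hdeg y
          have h6 : (dmi fst snd o y : ℤ) < q y := hx₀
          have hB1 := hB.1
          have hB2 := hB.2
          constructor
          · omega
          · omega
        · by_cases hz : y = z
          · subst hz
            have hC1 := hC.1
            have hC2 := hC.2
            constructor
            · omega
            · have : min (p y) (q y) ≤ q y := min_le_right _ _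
              omega
          · obtain ⟨hA1, hA2⟩ := hA y hy hz
            constructor
            · omega
            · omega
      · -- deficiency decreased
        have key : (∑ x, (q x - (dmi fst snd o' x : ℤ)).toNat) + 1
            = (∑ x, (q x - (dmi fst snd o x : ℤ)).toNat) := by
          have hsplit : ∀ x, x ≠ x₀ → x ≠ z →
              (q x - (dmi fst snd o' x : ℤ)).toNat = (q x - (dmi fst snd o x : ℤ)).toNat := by
            intro x hx1 hx2
            have h1 := (hA x hx1 hx2).2
            omega
          rw [← Finset.sum_erase_add _ _ (mem_univ x₀),
              ← Finset.sum_erase_add _ _ (mem_univ x₀)]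
          have hzmem : z ∈ univ.erase x₀ := Finset.mem_erase.mpr ⟨hzx₀, mem_univ z⟩
          rw [← Finset.sum_erase_add _ _ hzmem, ← Finset.sum_erase_add _ _ hzmem]
          have e1 : ∑ x ∈ (univ.erase x₀).erase z, (q x - (dmi fst snd o' x : ℤ)).toNat
              = ∑ x ∈ (univ.erase x₀).erase z, (q x - (dmi fst snd o x : ℤ)).toNat := by
            apply Finset.sum_congr rfl
            intro x hx
            have hx1 := Finset.mem_erase.mp hx
            have hx2 := Finset.mem_erase.mp hx1.2
            exact hsplit x hx2.1 hx1.1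
          have e2 : (q z - (dmi fst snd o' z : ℤ)).toNat = (q z - (dmi fst snd o z : ℤ)).toNat := by
            have h1 := hC.2
            omega
          have e3 : (q x₀ - (dmi fst snd o' x₀ : ℤ)).toNat + 1
              = (q x₀ - (dmi fst snd o x₀ : ℤ)).toNat := by
            have h1 := hB.2
            have h6 : (dmi fst snd o x₀ : ℤ) < q x₀ := hx₀
            omega
          omega
        omega
    · -- no surplus: contradiction
      exfalso
      push_neg at hsur
      -- sums over R
      have hlt : (∑ z ∈ R, (dmi fst snd o z : ℤ)) < ∑ z ∈ R, q z := by
        apply Finset.sum_lt_sum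
        · intro i hi; exact hsur i hi
        · exact ⟨x₀, hx₀R, by omega⟩
      have hq1 : (∑ z ∈ R, q z) ≤ ∑ z ∈ R, (dpl fst snd o₀ z : ℤ) := by
        apply Finset.sum_le_sum
        intro i _
        exact le_trans (le_max_right _ _) (h₀ i).1
      have hsub : (univ.filter (fun e => tl fst snd o₀ e ∈ R))
          ⊆ (univ.filter (fun e => hd fst snd o e ∈ R)) := by
        intro e he
        simp only [mem_filter, mem_univ, true_and] at he ⊢
        -- tl o₀ e ∈ {fst e, snd e}, so e meets R
        have hmeet : fst e ∈ R ∨ snd e ∈ R := by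
          rcases tl_mem fst snd o₀ e with h | h
          · left; rwa [← h]
          · right; rwa [← h]
        by_cases htl : tl fst snd o e ∈ R
        · -- closure
          simp only [hR, mem_filter, mem_univ, true_and] at htl ⊢
          exact htl.tail ⟨e, rfl, rfl⟩
        · rcases tl_hd_cases fst snd o e with ⟨h1, h2⟩ | ⟨h1, h2⟩ <;>
            rcases hmeet with hm | hm
          · exact absurd (h1 ▸ hm) htl
          · rwa [h2]
          · rwa [h2]
          · exact absurd (h1 ▸ hm) htl
      have hcard : (univ.filter (fun e => tl fst snd o₀ e ∈ R)).card
          ≤ (univ.filter (fun e => hd fst snd o e ∈ R)).card := Finset.card_le_card hsub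
      have hS3 : (∑ z ∈ R, (dpl fst snd o₀ z : ℤ))
          = ((univ.filter (fun e => tl fst snd o₀ e ∈ R)).card : ℤ) := by
        rw [← sum_dpl_eq fst snd o₀ R]; push_cast; ring
      have hS5 : (∑ z ∈ R, (dmi fst snd o z : ℤ))
          = ((univ.filter (fun e => hd fst snd o e ∈ R)).card : ℤ) := by
        rw [← sum_dmi_eq fst snd o R]; push_cast; ring
      have : ((univ.filter (fun e => hd fst snd o e ∈ R)).card : ℤ)
          < ((univ.filter (fun e => hd fst snd o e ∈ R)).card : ℤ) := by
        calc ((univ.filter (fun e => hd fst snd o e ∈ R)).card : ℤ)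
            = ∑ z ∈ R, (dmi fst snd o z : ℤ) := hS5.symm
          _ < ∑ z ∈ R, q z := hlt
          _ ≤ ∑ z ∈ R, (dpl fst snd o₀ z : ℤ) := hq1
          _ = ((univ.filter (fun e => tl fst snd o₀ e ∈ R)).card : ℤ) := hS3
          _ ≤ _ := by exact_mod_cast hcard
      omega

end EX

section Master
variable {V : Type*} {E : Type*} [Fintype V] [Fintype E] (fst snd : E → V)

noncomputable def NZ (p q : V → ℤ) : ℕ :=
  (univ.filter (fun o : E → Bool =>
    ∀ x, p x ≤ (dpl fst snd o x : ℤ) ∧ q x ≤ (dmi fst snd o x : ℤ))).card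

lemma tl_not (o : E → Bool) (e : E) : tl fst snd (fun e' => !(o e')) e = hd fst snd o e := by
  unfold tl hd; cases h : o e <;> simp [h]
lemma hd_not (o : E → Bool) (e : E) : hd fst snd (fun e' => !(o e')) e = tl fst snd o e := by
  unfold tl hd; cases h : o e <;> simp [h]

lemma dpl_not (o : E → Bool) (x : V) : dpl fst snd (fun e => !(o e)) x = dmi fst snd o x := by
  unfold dpl dmi; congr 1; apply filter_congr; intro e _; rw [tl_not]
lemma dmi_not (o : E → Bool) (x : V) : dmi fst snd (fun e => !(o e)) x = dpl fst snd o x := by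
  unfold dpl dmi; congr 1; apply filter_congr; intro e _; rw [hd_not]

lemma NZ_symm (p q : V → ℤ) : NZ fst snd p q = NZ fst snd q p := by
  unfold NZ
  apply Finset.card_bij (fun o _ => (fun e => !(o e)))
  · intro o ho
    simp only [mem_filter, mem_univ, true_and] at ho ⊢
    intro x
    rw [dpl_not, dmi_not]
    exact ⟨(ho x).2, (ho x).1⟩
  · intro o _ o' _ h
    funext e
    have := congrFun h e
    simpa using this
  · intro o ho
    refine ⟨(fun e => !(o e)), ?_, by funext e; simp⟩
    simp only [mem_filter, mem_univ, true_and] at ho ⊢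
    intro x
    rw [dpl_not, dmi_not]
    exact ⟨(ho x).2, (ho x).1⟩

noncomputable def hpl (κ : E → Option Bool) (x : V) : ℕ :=
  (univ.filter (fun e => (κ e = some true ∧ fst e = x) ∨ (κ e = some false ∧ snd e = x))).card
noncomputable def hmi (κ : E → Option Bool) (x : V) : ℕ :=
  (univ.filter (fun e => (κ e = some true ∧ snd e = x) ∨ (κ e = some false ∧ fst e = x))).card

lemma dpl_split (κ : E → Option Bool) (o : E → Bool)
    (hfix : ∀ e (b : Bool), κ e = some b → o e = b) (x : V) :
    dpl fst snd o x
      = hpl fst snd κ x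
        + dpl (fun e : {e : E // κ e = none} => fst e.1) (fun e => snd e.1) (fun e => o e.1) x := by
  unfold dpl
  have hu : univ.filter (fun e => tl fst snd o e = x)
      = (univ.filter (fun e => tl fst snd o e = x ∧ κ e ≠ none))
        ∪ (univ.filter (fun e => tl fst snd o e = x ∧ κ e = none)) := by
    ext e; simp only [mem_filter, mem_univ, true_and, mem_union]; tauto
  rw [hu, Finset.card_union_of_disjoint]
  · congr 1
    · -- fixed part equals hpl
      unfold hpl
      congr 1
      apply filter_congr
      intro e _
      cases hk : κ e with
      | none => simp [hk]
      | some b =>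
        have hb := hfix e b hk
        cases b
        · simp only [hk, ne_eq, reduceCtorEq, not_false_iff, and_true]
          unfold tl; rw [hb]
          simp
        · simp only [hk, ne_eq, reduceCtorEq, not_false_iff, and_true]
          unfold tl; rw [hb]
          simp
    · -- free part
      apply Finset.card_bij (fun (e : E) (he : e ∈ _) => (⟨e, (Finset.mem_filter.mp he).2.2⟩ : {e : E // κ e = none}))
      · intro e he
        simp only [mem_filter, mem_univ, true_and] at he ⊢
        exact he.1
      · intro e he e' he' h
        simpa using congrArg Subtype.val h
      · intro e' he'
        simp only [mem_filter, mem_univ, true_and] at he'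
        exact ⟨e'.1, Finset.mem_filter.mpr ⟨mem_univ _, he', e'.2⟩, by simp⟩
  · rw [Finset.disjoint_left]
    intro e he he'
    simp only [mem_filter, mem_univ, true_and] at he he'
    exact he.2 he'.2

lemma dmi_split (κ : E → Option Bool) (o : E → Bool)
    (hfix : ∀ e (b : Bool), κ e = some b → o e = b) (x : V) :
    dmi fst snd o x
      = hmi fst snd κ x
        + dmi (fun e : {e : E // κ e = none} => fst e.1) (fun e => snd e.1) (fun e => o e.1) x := by
  unfold dmi
  have hu : univ.filter (fun e => hd fst snd o e = x)
      = (univ.filter (fun e => hd fst snd o e = x ∧ κ e ≠ none))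
        ∪ (univ.filter (fun e => hd fst snd o e = x ∧ κ e = none)) := by
    ext e; simp only [mem_filter, mem_univ, true_and, mem_union]; tauto
  rw [hu, Finset.card_union_of_disjoint]
  · congr 1
    · unfold hmi
      congr 1
      apply filter_congr
      intro e _
      cases hk : κ e with
      | none => simp [hk]
      | some b =>
        have hb := hfix e b hk
        cases b
        · simp only [hk, ne_eq, reduceCtorEq, not_false_iff, and_true]
          unfold hd; rw [hb]
          simp
        · simp only [hk, ne_eq, reduceCtorEq, not_false_iff, and_true]
          unfold hd; rw [hb]
          simp
    · apply Finset.card_bij (fun (e : E) (he : e ∈ _) => (⟨e, (Finset.mem_filter.mp he).2.2⟩ : {e : E // κ e = none}))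
      · intro e he
        simp only [mem_filter, mem_univ, true_and] at he ⊢
        exact he.1
      · intro e he e' he' h
        simpa using congrArg Subtype.val h
      · intro e' he'
        simp only [mem_filter, mem_univ, true_and] at he'
        exact ⟨e'.1, Finset.mem_filter.mpr ⟨mem_univ _, he', e'.2⟩, by simp⟩
  · rw [Finset.disjoint_left]
    intro e he he'
    simp only [mem_filter, mem_univ, true_and] at he he'
    exact he.2 he'.2

end Master

section MasterId
variable {V : Type*} {E : Type*} [Fintype V] [Fintype E] (fst snd : E → V)

noncomputable def pat (p : (E → Bool) × (E → Bool)) : E → Option Bool :=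
  fun e => if p.1 e = p.2 e then some (p.1 e) else none

noncomputable def upF (κ : E → Option Bool) (τ : {e : E // κ e = none} → Bool) : E → Bool :=
  fun e => if h : κ e = none then τ ⟨e, h⟩ else (κ e).getD false

noncomputable def upM (κ : E → Option Bool) (τ : {e : E // κ e = none} → Bool) : E → Bool :=
  fun e => if h : κ e = none then !(τ ⟨e, h⟩) else (κ e).getD false

lemma upF_fix (κ : E → Option Bool) (τ : {e : E // κ e = none} → Bool) :
    ∀ e (b : Bool), κ e = some b → upF κ τ e = b := by
  intro e b hb
  unfold upF
  rw [dif_neg (by simp [hb])]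
  simp [hb]

lemma upM_fix (κ : E → Option Bool) (τ : {e : E // κ e = none} → Bool) :
    ∀ e (b : Bool), κ e = some b → upM κ τ e = b := by
  intro e b hb
  unfold upM
  rw [dif_neg (by simp [hb])]
  simp [hb]

lemma pat_fix1 (p : (E → Bool) × (E → Bool)) (κ : E → Option Bool) (hpat : pat p = κ) :
    ∀ e (b : Bool), κ e = some b → p.1 e = b := by
  intro e b hb
  rw [← hpat] at hb
  unfold pat at hb
  split_ifs at hb with h
  injection hb

lemma pat_fix2 (p : (E → Bool) × (E → Bool)) (κ : E → Option Bool) (hpat : pat p = κ) :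
    ∀ e (b : Bool), κ e = some b → p.2 e = b := by
  intro e b hb
  have h1 := pat_fix1 p κ hpat e b hb
  rw [← hpat] at hb
  unfold pat at hb
  split_ifs at hb with h
  rw [← h]; exact h1

lemma pat_flip (p : (E → Bool) × (E → Bool)) (κ : E → Option Bool) (hpat : pat p = κ) :
    ∀ e, κ e = none → p.2 e = !(p.1 e) := by
  intro e hk
  rw [← hpat] at hk
  unfold pat at hk
  split_ifs at hk with h
  cases h1 : p.1 e <;> cases h2 : p.2 e <;> simp_all

lemma master (u₁ v₁ u₂ v₂ : V → ℤ) :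
    NZ fst snd u₁ v₁ * NZ fst snd u₂ v₂
      = ∑ κ : E → Option Bool,
          NZ (fun e : {e : E // κ e = none} => fst e.1) (fun e => snd e.1)
            (fun x => max (u₁ x - hpl fst snd κ x) (v₂ x - hmi fst snd κ x))
            (fun x => max (v₁ x - hmi fst snd κ x) (u₂ x - hpl fst snd κ x)) := by
  classical
  unfold NZ
  rw [← Finset.card_product]
  rw [Finset.card_eq_sum_card_fiberwise (f := pat) (t := univ) (fun p _ => mem_univ _)]
  apply Finset.sum_congr rfl
  intro κ _
  apply Finset.card_bij' (i := fun p _ => (fun e : {e : E // κ e = none} => p.1 e.1))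
    (j := fun τ _ => (upF κ τ, upM κ τ))
  · -- i maps into target
    intro p hp
    simp only [Finset.mem_filter, Finset.mem_product, mem_univ, true_and] at hp
    obtain ⟨⟨hc1, hc2⟩, hpat⟩ := hp
    have hfix1 := pat_fix1 p κ hpat
    have hfix2 := pat_fix2 p κ hpat
    simp only [Finset.mem_filter, mem_univ, true_and]
    intro x
    have s1 := dpl_split fst snd κ p.1 hfix1 x
    have s2 := dmi_split fst snd κ p.1 hfix1 x
    have s3 := dpl_split fst snd κ p.2 hfix2 x
    have s4 := dmi_split fst snd κ p.2 hfix2 x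
    have hres2 : (fun e : {e : E // κ e = none} => p.2 e.1) = (fun e => !(p.1 e.1)) := by
      funext e; exact pat_flip p κ hpat e.1 e.2
    rw [hres2] at s3 s4
    rw [dpl_not] at s3
    rw [dmi_not] at s4
    have c1 := (hc1 x).1
    have c2 := (hc1 x).2
    have c3 := (hc2 x).1
    have c4 := (hc2 x).2
    rw [s1] at c1
    rw [s2] at c2
    rw [s3] at c3
    rw [s4] at c4
    refine ⟨max_le ?_ ?_, max_le ?_ ?_⟩
    · push_cast at c1 ⊢; omega
    · push_cast at c4 ⊢; omega
    · push_cast at c2 ⊢; omega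
    · push_cast at c3 ⊢; omega
  · -- j maps into source
    intro τ hτ
    simp only [Finset.mem_filter, mem_univ, true_and] at hτ
    have hfix1 := upF_fix κ τ
    have hfix2 := upM_fix κ τ
    have hres1 : (fun e : {e : E // κ e = none} => upF κ τ e.1) = τ := by
      funext e; unfold upF; rw [dif_pos e.2]
    have hres2 : (fun e : {e : E // κ e = none} => upM κ τ e.1) = (fun e => !(τ e)) := by
      funext e; unfold upM; rw [dif_pos e.2]
    simp only [Finset.mem_filter, Finset.mem_product, mem_univ, true_and]
    refine ⟨⟨?_, ?_⟩, ?_⟩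
    · intro x
      have s1 := dpl_split fst snd κ (upF κ τ) hfix1 x
      have s2 := dmi_split fst snd κ (upF κ τ) hfix1 x
      rw [hres1] at s1 s2
      have h := hτ x
      rw [max_le_iff, max_le_iff] at h
      obtain ⟨⟨h1, h2⟩, ⟨h3, h4⟩⟩ := h
      rw [s1, s2]
      constructor
      · push_cast; push_cast at h1; omega
      · push_cast; push_cast at h3; omega
    · intro x
      have s3 := dpl_split fst snd κ (upM κ τ) hfix2 x
      have s4 := dmi_split fst snd κ (upM κ τ) hfix2 x
      rw [hres2] at s3 s4
      rw [dpl_not] at s3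
      rw [dmi_not] at s4
      have h := hτ x
      rw [max_le_iff, max_le_iff] at h
      obtain ⟨⟨h1, h2⟩, ⟨h3, h4⟩⟩ := h
      rw [s3, s4]
      constructor
      · push_cast; push_cast at h4; omega
      · push_cast; push_cast at h2; omega
    · -- pat (upF, upM) = κ
      funext e
      show (if upF κ τ e = upM κ τ e then some (upF κ τ e) else none) = κ e
      cases hk : κ e with
      | none =>
        have h1 : upF κ τ e = τ ⟨e, hk⟩ := by unfold upF; rw [dif_pos hk]
        have h2 : upM κ τ e = !(τ ⟨e, hk⟩) := by unfold upM; rw [dif_pos hk]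
        rw [h1, h2]
        simp
      | some b =>
        have h1 : upF κ τ e = b := upF_fix κ τ e b hk
        have h2 : upM κ τ e = b := upM_fix κ τ e b hk
        rw [h1, h2]
        simp
  · -- left inverse
    intro p hp
    simp only [Finset.mem_filter, Finset.mem_product, mem_univ, true_and] at hp
    obtain ⟨⟨hc1, hc2⟩, hpat⟩ := hp
    have hfix1 := pat_fix1 p κ hpat
    have hfix2 := pat_fix2 p κ hpat
    have hflip := pat_flip p κ hpat
    have e1 : upF κ (fun e : {e : E // κ e = none} => p.1 e.1) = p.1 := by
      funext e
      unfold upF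
      by_cases h : κ e = none
      · rw [dif_pos h]
      · rw [dif_neg h]
        cases hk : κ e with
        | none => exact absurd hk h
        | some b => rw [hfix1 e b hk]; simp [hk]
    have e2 : upM κ (fun e : {e : E // κ e = none} => p.1 e.1) = p.2 := by
      funext e
      unfold upM
      by_cases h : κ e = none
      · rw [dif_pos h]
        exact (hflip e h).symm
      · rw [dif_neg h]
        cases hk : κ e with
        | none => exact absurd hk h
        | some b => rw [hfix2 e b hk]; simp [hk]
    calc (upF κ (fun e : {e : E // κ e = none} => p.1 e.1),
          upM κ (fun e : {e : E // κ e = none} => p.1 e.1)) = (p.1, p.2) := by rw [e1, e2]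
      _ = p := rfl
  · -- right inverse
    intro τ hτ
    funext e
    show upF κ τ e.1 = τ e
    unfold upF
    rw [dif_pos e.2]

end MasterId

section Lema
variable {V : Type*} [Fintype V]

lemma NZ_relabel {E E' : Type*} [Fintype E] [Fintype E'] (ι : E' ≃ E) (fst snd : E → V)
    (p q : V → ℤ) :
    NZ (fun e' => fst (ι e')) (fun e' => snd (ι e')) p q = NZ fst snd p q := by
  classical
  have hdp : ∀ (o' : E' → Bool) (x : V),
      dpl (fun e' => fst (ι e')) (fun e' => snd (ι e')) o' x
        = dpl fst snd (fun e => o' (ι.symm e)) x := by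
    intro o' x
    unfold dpl
    apply Finset.card_bij (fun e' _ => ι e')
    · intro e' he'
      simp only [mem_filter, mem_univ, true_and] at he' ⊢
      unfold tl at he' ⊢
      simpa using he'
    · intro a _ b _ h; exact ι.injective h
    · intro e he
      refine ⟨ι.symm e, ?_, by simp⟩
      simp only [mem_filter, mem_univ, true_and] at he ⊢
      unfold tl at he ⊢
      simpa using he
  have hdm : ∀ (o' : E' → Bool) (x : V),
      dmi (fun e' => fst (ι e')) (fun e' => snd (ι e')) o' x
        = dmi fst snd (fun e => o' (ι.symm e)) x := by
    intro o' x
    unfold dmi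
    apply Finset.card_bij (fun e' _ => ι e')
    · intro e' he'
      simp only [mem_filter, mem_univ, true_and] at he' ⊢
      unfold hd at he' ⊢
      simpa using he'
    · intro a _ b _ h; exact ι.injective h
    · intro e he
      refine ⟨ι.symm e, ?_, by simp⟩
      simp only [mem_filter, mem_univ, true_and] at he ⊢
      unfold hd at he ⊢
      simpa using he
  unfold NZ
  apply Finset.card_bij (fun (o' : E' → Bool) _ => (fun e => o' (ι.symm e)))
  · intro o' ho'
    simp only [mem_filter, mem_univ, true_and] at ho' ⊢
    intro x
    rw [← hdp, ← hdm]
    exact ho' x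
  · intro a _ b _ h
    funext e'
    have := congrFun h (ι e')
    simpa using this
  · intro o ho
    refine ⟨(fun e' => o (ι e')), ?_, by funext e; simp⟩
    simp only [mem_filter, mem_univ, true_and] at ho ⊢
    intro x
    rw [hdp, hdm]
    have h1 : (fun e => (fun e' => o (ι e')) (ι.symm e)) = o := by funext e; simp
    rw [h1]
    exact ho x

lemma hpl_none {E : Type*} [Fintype E] (fst snd : E → V) (x : V) :
    hpl fst snd (fun _ => (none : Option Bool)) x = 0 := by
  unfold hpl
  rw [Finset.card_eq_zero]
  ext e
  simp

lemma hmi_none {E : Type*} [Fintype E] (fst snd : E → V) (x : V) :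
    hmi fst snd (fun _ => (none : Option Bool)) x = 0 := by
  unfold hmi
  rw [Finset.card_eq_zero]
  ext e
  simp

/-- main sorting lemma by strong induction on the number of edges -/
lemma lema : ∀ (n : ℕ) (E : Type*) [Fintype E] (fst snd : E → V) (p q : V → ℤ),
    Fintype.card E ≤ n →
    NZ fst snd (fun x => max (p x) (q x)) (fun x => min (p x) (q x)) ≤ NZ fst snd p q := by
  intro n
  induction n with
  | zero =>
    intro E _ fst snd p q hcard
    have hE : IsEmpty E := by
      rw [← Fintype.card_eq_zero_iff]
      omega
    unfold NZ
    apply Finset.card_le_card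
    intro o ho
    simp only [mem_filter, mem_univ, true_and] at ho ⊢
    intro x
    have h1 := ho x
    have h0 : dpl fst snd o x = 0 := by
      unfold dpl
      rw [Finset.card_eq_zero]
      ext e
      exact absurd trivial (hE.elim e)
    have h0' : dmi fst snd o x = 0 := by
      unfold dmi
      rw [Finset.card_eq_zero]
      ext e
      exact absurd trivial (hE.elim e)
    rw [h0, h0'] at h1 ⊢
    omega
  | succ n ih =>
    intro E _ fst snd p q hcard
    by_cases hn : Fintype.card E ≤ n
    · exact ih E fst snd p q hn
    classical
    -- compare the erased sums (strong induction hypothesis)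
    have hsum : (∑ κ ∈ (univ : Finset (E → Option Bool)).erase (fun _ => (none : Option Bool)),
          NZ (fun e : {e : E // κ e = none} => fst e.1) (fun e => snd e.1)
            (fun x => max (max (p x) (q x) - hpl fst snd κ x) (max (p x) (q x) - hmi fst snd κ x))
            (fun x => max (min (p x) (q x) - hmi fst snd κ x) (min (p x) (q x) - hpl fst snd κ x)))
        ≤ ∑ κ ∈ (univ : Finset (E → Option Bool)).erase (fun _ => (none : Option Bool)),
          NZ (fun e : {e : E // κ e = none} => fst e.1) (fun e => snd e.1)
            (fun x => max (p x - hpl fst snd κ x) (p x - hmi fst snd κ x))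
            (fun x => max (q x - hmi fst snd κ x) (q x - hpl fst snd κ x)) := by
      apply Finset.sum_le_sum
      intro κ hκ
      have hne : κ ≠ (fun _ => (none : Option Bool)) := (Finset.mem_erase.mp hκ).1
      have hex : ∃ e₀, κ e₀ ≠ none := by
        by_contra hc
        push_neg at hc
        exact hne (funext fun e => hc e)
      obtain ⟨e₀, he₀⟩ := hex
      have hlt : Fintype.card {e : E // κ e = none} < Fintype.card E :=
        Fintype.card_subtype_lt (x := e₀) he₀
      have hcard' : Fintype.card {e : E // κ e = none} ≤ n := by omega
      have e1 : (fun x => max (max (p x) (q x) - hpl fst snd κ x) (max (p x) (q x) - hmi fst snd κ x))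
          = (fun x => max ((fun y => p y - min (hpl fst snd κ y : ℤ) (hmi fst snd κ y)) x)
              ((fun y => q y - min (hpl fst snd κ y : ℤ) (hmi fst snd κ y)) x)) := by
        funext x; beta_reduce; omega
      have e2 : (fun x => max (min (p x) (q x) - hmi fst snd κ x) (min (p x) (q x) - hpl fst snd κ x))
          = (fun x => min ((fun y => p y - min (hpl fst snd κ y : ℤ) (hmi fst snd κ y)) x)
              ((fun y => q y - min (hpl fst snd κ y : ℤ) (hmi fst snd κ y)) x)) := by
        funext x; beta_reduce; omega
      have e3 : (fun x => max (p x - hpl fst snd κ x) (p x - hmi fst snd κ x))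
          = (fun y => p y - min (hpl fst snd κ y : ℤ) (hmi fst snd κ y)) := by
        funext x; beta_reduce; omega
      have e4 : (fun x => max (q x - hmi fst snd κ x) (q x - hpl fst snd κ x))
          = (fun y => q y - min (hpl fst snd κ y : ℤ) (hmi fst snd κ y)) := by
        funext x; beta_reduce; omega
      rw [e1, e2, e3, e4]
      exact ih _ _ _ _ _ hcard'
    have hm1 := master fst snd (fun x => max (p x) (q x)) (fun x => min (p x) (q x))
      (fun x => min (p x) (q x)) (fun x => max (p x) (q x))
    have hm2 := master fst snd p q q p
    rw [NZ_symm fst snd (fun x => min (p x) (q x)) (fun x => max (p x) (q x))] at hm1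
    rw [NZ_symm fst snd q p] at hm2
    rw [← Finset.add_sum_erase _ _ (mem_univ (fun _ => (none : Option Bool)))] at hm1 hm2
    have hterm : ∀ (u v : V → ℤ),
        NZ (fun e : {e : E // (fun _ => (none : Option Bool)) e = none} => fst e.1)
           (fun e => snd e.1)
          (fun x => max (u x - hpl fst snd (fun _ => (none : Option Bool)) x)
                        (u x - hmi fst snd (fun _ => (none : Option Bool)) x))
          (fun x => max (v x - hmi fst snd (fun _ => (none : Option Bool)) x)
                        (v x - hpl fst snd (fun _ => (none : Option Bool)) x))
        = NZ fst snd u v := by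
      intro u v
      have h1 : (fun x => max (u x - hpl fst snd (fun _ => (none : Option Bool)) x)
                        (u x - hmi fst snd (fun _ => (none : Option Bool)) x))
          = u := by
        funext x; rw [hpl_none, hmi_none]; norm_num
      have h2 : (fun x => max (v x - hmi fst snd (fun _ => (none : Option Bool)) x)
                        (v x - hpl fst snd (fun _ => (none : Option Bool)) x))
          = v := by
        funext x; rw [hpl_none, hmi_none]; norm_num
      rw [h1, h2]
      have hι : ∀ (f : E → V), (fun e : {e : E // (fun _ => (none : Option Bool)) e = none} => f e.1)
          = (fun e' => f ((Equiv.subtypeUnivEquiv (fun e => rfl)) e')) := by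
        intro f; funext e'; rfl
      rw [hι fst, hι snd, NZ_relabel]
    rw [hterm (fun x => max (p x) (q x)) (fun x => min (p x) (q x))] at hm1
    rw [hterm p q] at hm2
    -- assemble
    have hq : NZ fst snd (fun x => max (p x) (q x)) (fun x => min (p x) (q x))
          * NZ fst snd (fun x => max (p x) (q x)) (fun x => min (p x) (q x))
          + NZ fst snd p q
        ≤ NZ fst snd p q * NZ fst snd p q
          + NZ fst snd (fun x => max (p x) (q x)) (fun x => min (p x) (q x)) := by
      rw [hm1, hm2]
      have := Nat.add_le_add_left hsum
        (NZ fst snd (fun x => max (p x) (q x)) (fun x => min (p x) (q x)))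
      calc NZ fst snd (fun x => max (p x) (q x)) (fun x => min (p x) (q x))
            + (∑ κ ∈ (univ : Finset (E → Option Bool)).erase (fun _ => (none : Option Bool)),
              NZ (fun e : {e : E // κ e = none} => fst e.1) (fun e => snd e.1)
                (fun x => max (max (p x) (q x) - hpl fst snd κ x) (max (p x) (q x) - hmi fst snd κ x))
                (fun x => max (min (p x) (q x) - hmi fst snd κ x) (min (p x) (q x) - hpl fst snd κ x)))
            + NZ fst snd p q
          ≤ NZ fst snd (fun x => max (p x) (q x)) (fun x => min (p x) (q x))
            + (∑ κ ∈ (univ : Finset (E → Option Bool)).erase (fun _ => (none : Option Bool)),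
              NZ (fun e : {e : E // κ e = none} => fst e.1) (fun e => snd e.1)
                (fun x => max (p x - hpl fst snd κ x) (p x - hmi fst snd κ x))
                (fun x => max (q x - hmi fst snd κ x) (q x - hpl fst snd κ x)))
            + NZ fst snd p q := by
            exact Nat.add_le_add_right this (NZ fst snd p q)
        _ = NZ fst snd p q
            + (∑ κ ∈ (univ : Finset (E → Option Bool)).erase (fun _ => (none : Option Bool)),
              NZ (fun e : {e : E // κ e = none} => fst e.1) (fun e => snd e.1)
                (fun x => max (p x - hpl fst snd κ x) (p x - hmi fst snd κ x))
                (fun x => max (q x - hmi fst snd κ x) (q x - hpl fst snd κ x)))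
            + NZ fst snd (fun x => max (p x) (q x)) (fun x => min (p x) (q x)) := by
            ring
    -- rule out the degenerate case using existence
    by_cases hA0 : NZ fst snd (fun x => max (p x) (q x)) (fun x => min (p x) (q x)) = 0
    · rw [hA0]; exact Nat.zero_le _
    have hB1 : 1 ≤ NZ fst snd p q := by
      have hA1 : 0 < NZ fst snd (fun x => max (p x) (q x)) (fun x => min (p x) (q x)) :=
        Nat.pos_of_ne_zero hA0
      unfold NZ at hA1
      rw [Finset.card_pos] at hA1
      obtain ⟨o₀, ho₀⟩ := hA1
      simp only [mem_filter, mem_univ, true_and] at ho₀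
      obtain ⟨o', ho'⟩ := EX fst snd p q o₀ ho₀
      unfold NZ
      rw [Nat.succ_le_iff, Finset.card_pos]
      exact ⟨o', by simp only [mem_filter, mem_univ, true_and]; exact ho'⟩
    by_contra hAB
    push_neg at hAB
    have h1 : NZ fst snd p q + 1
        ≤ NZ fst snd (fun x => max (p x) (q x)) (fun x => min (p x) (q x)) := hAB
    have hqz : ((NZ fst snd (fun x => max (p x) (q x)) (fun x => min (p x) (q x)) : ℤ))
          * (NZ fst snd (fun x => max (p x) (q x)) (fun x => min (p x) (q x)) : ℤ)
          + (NZ fst snd p q : ℤ)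
        ≤ (NZ fst snd p q : ℤ) * (NZ fst snd p q : ℤ)
          + (NZ fst snd (fun x => max (p x) (q x)) (fun x => min (p x) (q x)) : ℤ) := by
      exact_mod_cast hq
    have h1z : ((NZ fst snd p q : ℤ)) + 1
        ≤ (NZ fst snd (fun x => max (p x) (q x)) (fun x => min (p x) (q x)) : ℤ) := by
      exact_mod_cast h1
    have hB1z : (1 : ℤ) ≤ (NZ fst snd p q : ℤ) := by exact_mod_cast hB1
    nlinarith [hqz, h1z, hB1z]

end Lema

section MainZ
variable {V : Type*} [Fintype V]

theorem mainZ {E : Type*} [Fintype E] (fst snd : E → V) (a b r s : V → ℤ)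
    (habrs : ∀ x, a x + b x = r x + s x) :
    NZ fst snd (fun x => max (a x) (r x)) (fun x => min (b x) (s x))
      * NZ fst snd (fun x => min (a x) (r x)) (fun x => max (b x) (s x))
    ≤ NZ fst snd a b * NZ fst snd r s := by
  classical
  rw [master fst snd (fun x => max (a x) (r x)) (fun x => min (b x) (s x))
      (fun x => min (a x) (r x)) (fun x => max (b x) (s x))]
  rw [master fst snd a b r s]
  apply Finset.sum_le_sum
  intro κ _
  have eA : (fun x => max (max (a x) (r x) - hpl fst snd κ x) (max (b x) (s x) - hmi fst snd κ x))
      = (fun x => max ((fun y => max (a y - hpl fst snd κ y : ℤ) (s y - hmi fst snd κ y)) x)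
          ((fun y => max (b y - hmi fst snd κ y : ℤ) (r y - hpl fst snd κ y)) x)) := by
    funext x
    beta_reduce
    have := habrs x
    omega
  have eB : (fun x => max (min (b x) (s x) - hmi fst snd κ x) (min (a x) (r x) - hpl fst snd κ x))
      = (fun x => min ((fun y => max (a y - hpl fst snd κ y : ℤ) (s y - hmi fst snd κ y)) x)
          ((fun y => max (b y - hmi fst snd κ y : ℤ) (r y - hpl fst snd κ y)) x)) := by
    funext x
    beta_reduce
    have := habrs x
    omega
  rw [eA, eB]
  exact lema (Fintype.card {e : E // κ e = none}) _ _ _ _ _ le_rfl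

end MainZ


/-- Negative-lattice-type inequality for orientation counts: with the same
setup as for the orientation lemma (multigraph via `fst, snd : E → V`,
orientations `o : E → Bool`, `N a b` the number of orientations with
`d⁺ ≥ a`, `d⁻ ≥ b` pointwise), if `a + b = r + s` componentwise then
`N(a,b)·N(r,s) ≥ N(a∨r, b∧s)·N(a∧r, b∨s)`. -/
theorem orientation_count_nlc {V E : Type*} [Fintype V] [Fintype E]
    (fst snd : E → V)
    (dplus dminus : (E → Bool) → V → ℕ)
    (hdp : ∀ o x, dplus o x =
      (univ.filter (fun e => (o e = true ∧ fst e = x) ∨ (o e = false ∧ snd e = x))).card)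
    (hdm : ∀ o x, dminus o x =
      (univ.filter (fun e => (o e = true ∧ snd e = x) ∨ (o e = false ∧ fst e = x))).card)
    (N : (V → ℕ) → (V → ℕ) → ℕ)
    (hN : ∀ a b, N a b =
      (univ.filter (fun o : E → Bool => ∀ x, a x ≤ dplus o x ∧ b x ≤ dminus o x)).card)
    (a b r s : V → ℕ)
    (habrs : ∀ x, a x + b x = r x + s x) :
    N (fun x => max (a x) (r x)) (fun x => min (b x) (s x)) *
      N (fun x => min (a x) (r x)) (fun x => max (b x) (s x)) ≤
    N a b * N r s := by
  classical
  have hdpl : ∀ (o : E → Bool) (x : V), dplus o x = dpl fst snd o x := by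
    intro o x
    rw [hdp]
    unfold dpl
    congr 1
    apply filter_congr
    intro e _
    unfold tl
    cases h : o e <;> simp [h]
  have hdmi : ∀ (o : E → Bool) (x : V), dminus o x = dmi fst snd o x := by
    intro o x
    rw [hdm]
    unfold dmi
    congr 1
    apply filter_congr
    intro e _
    unfold hd
    cases h : o e <;> simp [h]
  have hNZ : ∀ (u v : V → ℕ), N u v = NZ fst snd (fun x => (u x : ℤ)) (fun x => (v x : ℤ)) := by
    intro u v
    rw [hN]
    unfold NZ
    congr 1
    apply filter_congr
    intro o _
    simp only [eq_iff_iff]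
    constructor
    · intro h x
      have := h x
      rw [hdpl, hdmi] at this
      exact ⟨by exact_mod_cast this.1, by exact_mod_cast this.2⟩
    · intro h x
      have := h x
      rw [hdpl, hdmi]
      exact ⟨by exact_mod_cast this.1, by exact_mod_cast this.2⟩
  rw [hNZ, hNZ, hNZ, hNZ]
  have e1 : (fun x => ((max (a x) (r x) : ℕ) : ℤ)) = (fun x => max ((a x : ℤ)) ((r x : ℤ))) := by
    funext x; push_cast; rfl
  have e2 : (fun x => ((min (b x) (s x) : ℕ) : ℤ)) = (fun x => min ((b x : ℤ)) ((s x : ℤ))) := by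
    funext x; push_cast; rfl
  have e3 : (fun x => ((min (a x) (r x) : ℕ) : ℤ)) = (fun x => min ((a x : ℤ)) ((r x : ℤ))) := by
    funext x; push_cast; rfl
  have e4 : (fun x => ((max (b x) (s x) : ℕ) : ℤ)) = (fun x => max ((b x : ℤ)) ((s x : ℤ))) := by
    funext x; push_cast; rfl
  rw [e1, e2, e3, e4]
  apply mainZ
  intro x
  have := habrs x
  push_cast
  exact_mod_cast this
end

section
/- A subset C of ℕ^n is called convex if a, c ∈ C and a ≤ b ≤ c (componentwise) imply b ∈ C. Let m, n be positive integers, let γ ∈ ℝ≥0^{[m]×[n]}, let σ : [m] → [n] be random with P(σ) proportional to ∏_{i∈[m]} γ_{i,σ(i)}, let f ∈ ℕ^n, and for a ∈ ℕ^n let M_f(a) = P(a_j ≤ |σ^{-1}(j)| ≤ a_j + f_j for all j ∈ [n]). Then the support {a ∈ ℕ^n : M_f(a) > 0} is convex. -/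
open Finset
open scoped Classical

private lemma interp_aux {m n : ℕ} (b f : Fin n → ℕ) (σc : Fin m → Fin n)
    (hc : ∀ j, b j ≤ (univ.filter (fun i => σc i = j)).card) :
    ∀ (d : ℕ) (σ : Fin m → Fin n),
      (univ.filter (fun i => σ i ≠ σc i)).card ≤ d →
      (∀ j, (univ.filter (fun i => σ i = j)).card ≤ b j + f j) →
      ∃ τ : Fin m → Fin n, (∀ i, τ i = σ i ∨ τ i = σc i) ∧
        ∀ j, b j ≤ (univ.filter (fun i => τ i = j)).card ∧
          (univ.filter (fun i => τ i = j)).card ≤ b j + f j := by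
  intro d
  induction d with
  | zero =>
    intro σ hd hub
    have hσ : σ = σc := by
      funext i
      by_contra hne
      have : i ∈ univ.filter (fun i => σ i ≠ σc i) := by simp [hne]
      have := Finset.card_pos.2 ⟨i, this⟩
      omega
    subst hσ
    exact ⟨σ, fun i => Or.inl rfl, fun j => ⟨hc j, hub j⟩⟩
  | succ d ih =>
    intro σ hd hub
    by_cases hlow : ∀ j, b j ≤ (univ.filter (fun i => σ i = j)).card
    · exact ⟨σ, fun i => Or.inl rfl, fun j => ⟨hlow j, hub j⟩⟩
    · push_neg at hlow
      obtain ⟨j, hj⟩ := hlow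
      have hlt : (univ.filter (fun i => σ i = j)).card <
          (univ.filter (fun i => σc i = j)).card := lt_of_lt_of_le hj (hc j)
      have hne : ¬ (univ.filter (fun i => σc i = j) ⊆
          univ.filter (fun i => σ i = j)) := fun hsub =>
        absurd (Finset.card_le_card hsub) (not_le.2 hlt)
      obtain ⟨i, hi1, hi2⟩ := Finset.not_subset.1 hne
      have hσci : σc i = j := (Finset.mem_filter.1 hi1).2
      have hσi : σ i ≠ j := by
        intro h; exact hi2 (Finset.mem_filter.2 ⟨Finset.mem_univ i, h⟩)
      set σ' : Fin m → Fin n := Function.update σ i j with hσ'def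
      have hσ'i : σ' i = j := Function.update_self i j σ
      have hσ'ne : ∀ x, x ≠ i → σ' x = σ x := fun x hx =>
        Function.update_of_ne hx j σ
      -- disagreement decreases
      have hdis : (univ.filter (fun x => σ' x ≠ σc x)).card ≤ d := by
        have hsub : univ.filter (fun x => σ' x ≠ σc x) ⊆
            (univ.filter (fun x => σ x ≠ σc x)).erase i := by
          intro x hx
          simp only [Finset.mem_filter, Finset.mem_univ, true_and] at hx
          have hxi : x ≠ i := by
            rintro rfl
            exact hx (by rw [hσ'i, hσci])
          rw [hσ'ne x hxi] at hx
          exact Finset.mem_erase.2 ⟨hxi, by simp [hx]⟩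
        have hi_mem : i ∈ univ.filter (fun x => σ x ≠ σc x) := by
          simp only [Finset.mem_filter, Finset.mem_univ, true_and]
          rw [hσci]; exact hσi
        have := Finset.card_le_card hsub
        rw [Finset.card_erase_of_mem hi_mem] at this
        omega
      -- upper bounds preserved
      have hub' : ∀ j'', (univ.filter (fun x => σ' x = j'')).card ≤ b j'' + f j'' := by
        intro j''
        by_cases hjj : j'' = j
        · subst hjj
          have hsub : univ.filter (fun x => σ' x = j'') ⊆
              insert i (univ.filter (fun x => σ x = j'')) := by
            intro x hx
            simp only [Finset.mem_filter, Finset.mem_univ, true_and] at hx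
            by_cases hxi : x = i
            · subst hxi; exact Finset.mem_insert_self x _
            · rw [hσ'ne x hxi] at hx
              exact Finset.mem_insert_of_mem (by simp [hx])
          have := Finset.card_le_card hsub
          have := Finset.card_insert_le i (univ.filter (fun x => σ x = j''))
          omega
        · have hsub : univ.filter (fun x => σ' x = j'') ⊆
              univ.filter (fun x => σ x = j'') := by
            intro x hx
            simp only [Finset.mem_filter, Finset.mem_univ, true_and] at hx
            have hxi : x ≠ i := by
              rintro rfl; rw [hσ'i] at hx; exact hjj hx.symm
            rw [hσ'ne x hxi] at hx
            simp [hx]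
          exact le_trans (Finset.card_le_card hsub) (hub j'')
      obtain ⟨τ, hτagree, hτbox⟩ := ih σ' hdis hub'
      refine ⟨τ, fun x => ?_, hτbox⟩
      rcases hτagree x with h | h
      · by_cases hxi : x = i
        · subst hxi; rw [h, hσ'i, ← hσci]; exact Or.inr rfl
        · rw [h, hσ'ne x hxi]; exact Or.inl rfl
      · exact Or.inr h

/-- Convexity of the support of `M_f`: balls `i ∈ [m]` land in urns `j ∈ [n]`
independently with `P(σ(i)=j) ∝ γ i j`; `M_f(a)` is the probability that
`a_j ≤ |σ⁻¹(j)| ≤ a_j + f_j` for all `j`.  The support of `M_f` is convex. -/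
theorem support_Mf_convex (m n : ℕ) (hm : 0 < m) (hn : 0 < n)
    (γ : Fin m → Fin n → ℝ) (hγ : ∀ i j, 0 ≤ γ i j)
    (hrow : ∀ i, 0 < ∑ j, γ i j)
    (W : (Fin m → Fin n) → ℝ) (hW : ∀ σ, W σ = ∏ i, γ i (σ i))
    (f : Fin n → ℕ) (M : (Fin n → ℕ) → ℝ)
    (hM : ∀ a, M a =
      (∑ σ ∈ univ.filter (fun σ : Fin m → Fin n =>
          ∀ j, a j ≤ (univ.filter (fun i => σ i = j)).card ∧
            (univ.filter (fun i => σ i = j)).card ≤ a j + f j), W σ) /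
        (∑ σ : Fin m → Fin n, W σ))
    (a b c : Fin n → ℕ) (hab : ∀ j, a j ≤ b j) (hbc : ∀ j, b j ≤ c j)
    (hMa : 0 < M a) (hMc : 0 < M c) :
    0 < M b := by
  have hWnn : ∀ σ : Fin m → Fin n, 0 ≤ W σ := fun σ => by
    rw [hW]; exact Finset.prod_nonneg fun i _ => hγ i (σ i)
  have hden_nn : 0 ≤ ∑ σ : Fin m → Fin n, W σ :=
    Finset.sum_nonneg fun σ _ => hWnn σ
  have hden : 0 < ∑ σ : Fin m → Fin n, W σ := by
    rcases lt_or_eq_of_le hden_nn with h | h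
    · exact h
    · exfalso; rw [hM a, ← h, div_zero] at hMa; exact lt_irrefl 0 hMa
  -- numerator positivity extractor
  have key : ∀ v : Fin n → ℕ, 0 < M v →
      ∃ σ ∈ univ.filter (fun σ : Fin m → Fin n =>
          ∀ j, v j ≤ (univ.filter (fun i => σ i = j)).card ∧
            (univ.filter (fun i => σ i = j)).card ≤ v j + f j), 0 < W σ := by
    intro v hv
    rw [hM v] at hv
    have hnum : 0 < ∑ σ ∈ univ.filter (fun σ : Fin m → Fin n =>
        ∀ j, v j ≤ (univ.filter (fun i => σ i = j)).card ∧
          (univ.filter (fun i => σ i = j)).card ≤ v j + f j), W σ := by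
      by_contra h
      push_neg at h
      have : (∑ σ ∈ univ.filter (fun σ : Fin m → Fin n =>
        ∀ j, v j ≤ (univ.filter (fun i => σ i = j)).card ∧
          (univ.filter (fun i => σ i = j)).card ≤ v j + f j), W σ) /
          (∑ σ : Fin m → Fin n, W σ) ≤ 0 := div_nonpos_of_nonpos_of_nonneg h hden_nn
      linarith
    by_contra h
    push_neg at h
    have : (∑ σ ∈ univ.filter (fun σ : Fin m → Fin n =>
        ∀ j, v j ≤ (univ.filter (fun i => σ i = j)).card ∧
          (univ.filter (fun i => σ i = j)).card ≤ v j + f j), W σ) ≤ 0 :=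
      Finset.sum_nonpos fun σ hσ => h σ hσ
    linarith
  obtain ⟨σa, hσa_mem, hWa⟩ := key a hMa
  obtain ⟨σc, hσc_mem, hWc⟩ := key c hMc
  have hσa_box := (Finset.mem_filter.1 hσa_mem).2
  have hσc_box := (Finset.mem_filter.1 hσc_mem).2
  -- each factor of a positive product of nonnegatives is positive
  have hfac : ∀ (σ : Fin m → Fin n), 0 < W σ → ∀ i, 0 < γ i (σ i) := by
    intro σ hWσ i
    rcases lt_or_eq_of_le (hγ i (σ i)) with h | h
    · exact h
    · exfalso
      rw [hW] at hWσ
      have : (∏ i, γ i (σ i)) = 0 :=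
        Finset.prod_eq_zero (Finset.mem_univ i) h.symm
      linarith
  have hfa := hfac σa hWa
  have hfc := hfac σc hWc
  -- apply interpolation
  have hclow : ∀ j, b j ≤ (univ.filter (fun i => σc i = j)).card := fun j =>
    le_trans (hbc j) (hσc_box j).1
  have haub : ∀ j, (univ.filter (fun i => σa i = j)).card ≤ b j + f j := fun j =>
    le_trans (hσa_box j).2 (by have := hab j; omega)
  obtain ⟨τ, hτagree, hτbox⟩ := interp_aux b f σc hclow
    ((univ.filter (fun i => σa i ≠ σc i)).card) σa le_rfl haub
  have hWτ : 0 < W τ := by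
    rw [hW]
    apply Finset.prod_pos
    intro i _
    rcases hτagree i with h | h
    · rw [h]; exact hfa i
    · rw [h]; exact hfc i
  have hτmem : τ ∈ univ.filter (fun σ : Fin m → Fin n =>
      ∀ j, b j ≤ (univ.filter (fun i => σ i = j)).card ∧
        (univ.filter (fun i => σ i = j)).card ≤ b j + f j) :=
    Finset.mem_filter.2 ⟨Finset.mem_univ τ, hτbox⟩
  have hnum_b : 0 < ∑ σ ∈ univ.filter (fun σ : Fin m → Fin n =>
      ∀ j, b j ≤ (univ.filter (fun i => σ i = j)).card ∧
        (univ.filter (fun i => σ i = j)).card ≤ b j + f j), W σ :=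
    lt_of_lt_of_le hWτ (Finset.single_le_sum (fun σ _ => hWnn σ) hτmem)
  rw [hM b]
  exact div_pos hnum_b hden
end

section
/- Let σ, τ : [m] → [n] and suppose i ∈ [n] satisfies |σ^{-1}(i)| > |τ^{-1}(i)|. Then, viewing σ and τ as edge sets of bipartite graphs on [m] ∪ [n] (with ball k joined to urn σ(k), respectively τ(k)), there exists j ∈ [n] with |σ^{-1}(j)| < |τ^{-1}(j)| and a ρ : [m] → [n] such that ρ(k) ∈ {σ(k), τ(k)} for all k, |ρ^{-1}(i)| = |σ^{-1}(i)| − 1, |ρ^{-1}(j)| = |σ^{-1}(j)| + 1, and |ρ^{-1}(k)| = |σ^{-1}(k)| for all k ∈ [n] \ {i, j}. -/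
open Finset
open scoped Classical

private lemma count_update_other {m n : ℕ} (σ : Fin m → Fin n) (k₀ : Fin m) (j : Fin n)
    (c : Fin n) (hc : σ k₀ ≠ c) (hcj : j ≠ c) :
    (univ.filter (fun k => Function.update σ k₀ j k = c)).card
      = (univ.filter (fun k => σ k = c)).card := by
  congr 1
  ext k
  simp only [mem_filter, mem_univ, true_and, Function.update_apply]
  split_ifs with hk
  · subst hk
    exact ⟨fun hh => absurd hh hcj, fun hh => absurd hh hc⟩
  · exact Iff.rfl

private lemma count_update_new {m n : ℕ} (σ : Fin m → Fin n) (k₀ : Fin m) (j : Fin n)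
    (hne : σ k₀ ≠ j) :
    (univ.filter (fun k => Function.update σ k₀ j k = j)).card
      = (univ.filter (fun k => σ k = j)).card + 1 := by
  have hset : (univ.filter (fun k => Function.update σ k₀ j k = j))
      = insert k₀ (univ.filter (fun k => σ k = j)) := by
    ext k
    simp only [mem_filter, mem_univ, true_and, Function.update_apply, mem_insert]
    split_ifs with hk
    · simp [hk]
    · simp [hk]
  rw [hset, card_insert_of_notMem (by simp [hne])]

private lemma count_update_old {m n : ℕ} (σ : Fin m → Fin n) (k₀ : Fin m) (j : Fin n)
    (hne : σ k₀ ≠ j) :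
    (univ.filter (fun k => Function.update σ k₀ j k = σ k₀)).card
      = (univ.filter (fun k => σ k = σ k₀)).card - 1 := by
  have hset : (univ.filter (fun k => Function.update σ k₀ j k = σ k₀))
      = (univ.filter (fun k => σ k = σ k₀)).erase k₀ := by
    ext k
    simp only [mem_filter, mem_univ, true_and, Function.update_apply, mem_erase]
    split_ifs with hk
    · subst hk
      simp [Ne.symm hne]
    · simp [hk]
  rw [hset, card_erase_of_mem (by simp)]

private lemma aux_alt {m n : ℕ} : ∀ (N : ℕ) (σ τ : Fin m → Fin n),
    (univ.filter (fun k => σ k ≠ τ k)).card ≤ N →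
    ∀ i : Fin n,
    (univ.filter (fun k => τ k = i)).card < (univ.filter (fun k => σ k = i)).card →
    ∃ (j : Fin n) (ρ : Fin m → Fin n),
      (univ.filter (fun k => σ k = j)).card < (univ.filter (fun k => τ k = j)).card ∧
      (∀ k, ρ k = σ k ∨ ρ k = τ k) ∧
      (univ.filter (fun k => ρ k = i)).card = (univ.filter (fun k => σ k = i)).card - 1 ∧
      (univ.filter (fun k => ρ k = j)).card = (univ.filter (fun k => σ k = j)).card + 1 ∧
      (∀ k : Fin n, k ≠ i → k ≠ j →
        (univ.filter (fun k' => ρ k' = k)).card = (univ.filter (fun k' => σ k' = k)).card) := by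
  intro N
  induction N with
  | zero =>
    intro σ τ hcard i h
    exfalso
    have h0 : (univ.filter (fun k => σ k ≠ τ k)) = ∅ :=
      card_eq_zero.mp (Nat.le_zero.mp hcard)
    have : ∀ k, σ k = τ k := by
      intro k
      by_contra hk
      have : k ∈ (univ.filter (fun k => σ k ≠ τ k)) := by simp [hk]
      simp [h0] at this
    have : (univ.filter (fun k => τ k = i)) = (univ.filter (fun k => σ k = i)) := by
      ext k; simp [this k]
    rw [this] at h
    exact lt_irrefl _ h
  | succ N ih =>
    intro σ τ hcard i h
    -- find k₀ with σ k₀ = i, τ k₀ ≠ i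
    obtain ⟨k₀, hk₀σ, hk₀τ⟩ : ∃ k₀, σ k₀ = i ∧ τ k₀ ≠ i := by
      by_contra hc
      push_neg at hc
      have hsub : (univ.filter (fun k => σ k = i)) ⊆ (univ.filter (fun k => τ k = i)) := by
        intro k hk
        simp only [mem_filter, mem_univ, true_and] at hk ⊢
        exact hc k hk
      exact absurd (card_le_card hsub) (by omega)
    set j₁ := τ k₀ with hj₁
    have hne : σ k₀ ≠ j₁ := by rw [hk₀σ]; exact fun hh => hk₀τ hh.symm
    have hij₁ : i ≠ j₁ := hk₀σ ▸ hne
    set ρ₀ := Function.update σ k₀ j₁ with hρ₀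
    have A1 : (univ.filter (fun k => ρ₀ k = i)).card
        = (univ.filter (fun k => σ k = i)).card - 1 := by
      rw [← hk₀σ]; exact count_update_old σ k₀ j₁ hne
    have A2 : (univ.filter (fun k => ρ₀ k = j₁)).card
        = (univ.filter (fun k => σ k = j₁)).card + 1 :=
      count_update_new σ k₀ j₁ hne
    have A3 : ∀ c : Fin n, c ≠ i → c ≠ j₁ →
        (univ.filter (fun k => ρ₀ k = c)).card = (univ.filter (fun k => σ k = c)).card := by
      intro c hci hcj
      exact count_update_other σ k₀ j₁ c (hk₀σ ▸ fun hh => hci hh.symm) (fun hh => hcj hh.symm)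
    have hρ₀mem : ∀ k, ρ₀ k = σ k ∨ ρ₀ k = τ k := by
      intro k
      rw [hρ₀, Function.update_apply]
      split_ifs with hk
      · right; rw [hk]
      · left; rfl
    have A4 : (univ.filter (fun k => ρ₀ k ≠ τ k)).card ≤ N := by
      have hset : (univ.filter (fun k => ρ₀ k ≠ τ k))
          = (univ.filter (fun k => σ k ≠ τ k)).erase k₀ := by
        ext k
        simp only [mem_filter, mem_univ, true_and, mem_erase, hρ₀, Function.update_apply]
        split_ifs with hk
        · subst hk; simp; exact hj₁
        · simp [hk]
      have hmem : k₀ ∈ (univ.filter (fun k => σ k ≠ τ k)) := by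
        simp only [mem_filter, mem_univ, true_and]
        rw [hk₀σ]; exact fun hh => hk₀τ hh.symm
      rw [hset, card_erase_of_mem hmem]
      omega
    by_cases hj₁lt : (univ.filter (fun k => σ k = j₁)).card
        < (univ.filter (fun k => τ k = j₁)).card
    · exact ⟨j₁, ρ₀, hj₁lt, hρ₀mem, A1, A2, A3⟩
    · -- recurse
      push_neg at hj₁lt
      have hrec : (univ.filter (fun k => τ k = j₁)).card
          < (univ.filter (fun k => ρ₀ k = j₁)).card := by omega
      obtain ⟨j, ρ, hj, hρmem, h1, h2, h3⟩ := ih ρ₀ τ A4 j₁ hrec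
      -- j ≠ i
      have hτi : (univ.filter (fun k => τ k = i)).card
          ≤ (univ.filter (fun k => ρ₀ k = i)).card := by omega
      have hji : j ≠ i := by
        intro hh; subst hh; omega
      have hjj₁ : j ≠ j₁ := by
        intro hh; subst hh; omega
      refine ⟨j, ρ, ?_, ?_, ?_, ?_, ?_⟩
      · rw [← A3 j hji hjj₁]; exact hj
      · intro k
        rcases hρmem k with hk | hk
        · rcases hρ₀mem k with hk' | hk'
          · left; rw [hk, hk']
          · right; rw [hk, hk']
        · right; exact hk
      · rw [h3 i hij₁ (Ne.symm hji), A1]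
      · rw [h2, A3 j hji hjj₁]
      · intro c hci hcj
        by_cases hcj₁ : c = j₁
        · subst hcj₁; omega
        · rw [h3 c hcj₁ hcj, A3 c hci hcj₁]

/-- The alternating-path claim: if `σ, τ : [m] → [n]` and urn `i` has more
`σ`-balls than `τ`-balls, then there are an urn `j` with fewer `σ`-balls than
`τ`-balls and a `ρ : [m] → [n]` with `ρ(k) ∈ {σ(k), τ(k)}` for all `k`, whose
urn occupancies agree with those of `σ` except that urn `i` loses one ball
and urn `j` gains one. -/
theorem alternating_path_claim (m n : ℕ) (σ τ : Fin m → Fin n) (i : Fin n)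
    (h : (univ.filter (fun k => τ k = i)).card < (univ.filter (fun k => σ k = i)).card) :
    ∃ (j : Fin n) (ρ : Fin m → Fin n),
      (univ.filter (fun k => σ k = j)).card < (univ.filter (fun k => τ k = j)).card ∧
      (∀ k, ρ k = σ k ∨ ρ k = τ k) ∧
      (univ.filter (fun k => ρ k = i)).card = (univ.filter (fun k => σ k = i)).card - 1 ∧
      (univ.filter (fun k => ρ k = j)).card = (univ.filter (fun k => σ k = j)).card + 1 ∧
      (∀ k : Fin n, k ≠ i → k ≠ j →
        (univ.filter (fun k' => ρ k' = k)).card = (univ.filter (fun k' => σ k' = k)).card) := by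
  exact aux_alt (univ.filter (fun k => σ k ≠ τ k)).card σ τ le_rfl i h
end

section
/- Let m, n be positive integers, γ : [m]×[n] → ℝ≥0 with each row γ_i summing to 1, and let σ : [m] → [n] be random with the σ(i) independent and P(σ(i) = j) = γ_{ij}. Let B_i = |σ^{-1}(i)|. Then for any i ∈ [n], k ∈ ℕ, and any event Q determined by (σ^{-1}(j) : j ≠ i): P(B_i = k+1 and Q) = (1/(k+1)) · ∑_{l∈[m]} γ_{li} · P^{[m]∖{l}}(B_i = k and Q), where P^{[m]∖{l}} denotes the analogous independent measure on functions [m]∖{l} → [n] (with B_i and Q reinterpreted there). -/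
open Finset
open scoped Classical

/-- Observation (L1): balls `x ∈ [m]` land independently in urns `j ∈ [n]`
with `P(σ(x)=j) = γ x j` (rows of `γ` sum to 1).  `Qhat` is a predicate on
occupancy patterns `(σ⁻¹(j))_j` depending only on coordinates `j ≠ i`.  Then
`P(B_i = k+1, Q) = (1/(k+1)) ∑_{l∈[m]} γ l i · P^{[m]∖{l}}(B_i = k, Q)`,
where `P^{[m]∖{l}}` is the analogous measure on functions `[m]∖{l} → [n]`
(with `B_i` and `Q` reinterpreted there via `σ⁻¹(j) ∩ ([m]∖{l})`). -/
theorem urn_recursion (m n : ℕ) (γ : Fin m → Fin n → ℝ)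
    (hγ : ∀ x j, 0 ≤ γ x j) (hrow : ∀ x, ∑ j, γ x j = 1)
    (i : Fin n) (k : ℕ)
    (Qhat : (Fin n → Finset (Fin m)) → Prop)
    (hQ : ∀ S T : Fin n → Finset (Fin m),
      (∀ j, j ≠ i → S j = T j) → (Qhat S ↔ Qhat T)) :
    (∑ σ ∈ univ.filter (fun σ : Fin m → Fin n =>
        (univ.filter (fun x => σ x = i)).card = k + 1 ∧
        Qhat (fun j => univ.filter (fun x => σ x = j))),
      ∏ x, γ x (σ x)) =
    (1 / ((k : ℝ) + 1)) * ∑ l : Fin m, γ l i *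
      (∑ τ ∈ univ.filter (fun τ : {x : Fin m // x ≠ l} → Fin n =>
          (univ.filter (fun x : {x : Fin m // x ≠ l} => τ x = i)).card = k ∧
          Qhat (fun j =>
            (univ.filter (fun x : {x : Fin m // x ≠ l} => τ x = j)).image
              Subtype.val)),
        ∏ x : {x : Fin m // x ≠ l}, γ x.1 (τ x)) := by
  classical
  set F : (Fin m → Fin n) → ℝ := fun σ => ∏ x, γ x (σ x) with hF
  set condA : (Fin m → Fin n) → Prop := fun σ =>
      (univ.filter (fun x => σ x = i)).card = k + 1 ∧
      Qhat (fun j => univ.filter (fun x => σ x = j)) with hcondA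
  -- basic facts about σ with σ l = i
  have himg : ∀ (l : Fin m) (σ : Fin m → Fin n) (j : Fin n),
      (univ.filter (fun x : {x : Fin m // x ≠ l} => σ x.1 = j)).image Subtype.val
        = (univ.erase l).filter (fun x => σ x = j) := by
    intro l σ j
    ext x
    simp only [mem_image, mem_filter, mem_univ, true_and, mem_erase, and_true]
    constructor
    · rintro ⟨⟨y, hy⟩, h1, rfl⟩; exact ⟨hy, h1⟩
    · rintro ⟨hx, h1⟩; exact ⟨⟨x, hx⟩, h1, rfl⟩
  have herase : ∀ (l : Fin m) (σ : Fin m → Fin n), σ l = i → ∀ j, j ≠ i →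
      (univ.erase l).filter (fun x => σ x = j) = univ.filter (fun x => σ x = j) := by
    intro l σ hl j hj
    ext x
    simp only [mem_filter, mem_erase, mem_univ, true_and, and_true]
    constructor
    · rintro ⟨_, h⟩; exact h
    · intro h
      exact ⟨fun hxl => hj (by rw [← h, hxl, hl]), h⟩
  have hcard : ∀ (l : Fin m) (σ : Fin m → Fin n), σ l = i →
      (univ.filter (fun x => σ x = i)).card
        = (univ.filter (fun x : {x : Fin m // x ≠ l} => σ x.1 = i)).card + 1 := by
    intro l σ hl
    have h1 : univ.filter (fun x => σ x = i)
        = insert l ((univ.erase l).filter (fun x => σ x = i)) := by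
      ext x
      simp only [mem_filter, mem_univ, true_and, mem_insert, mem_erase, and_true]
      constructor
      · intro h
        by_cases hx : x = l
        · exact Or.inl hx
        · exact Or.inr ⟨hx, h⟩
      · rintro (rfl | ⟨_, h⟩)
        · exact hl
        · exact h
    have h2 : l ∉ (univ.erase l).filter (fun x => σ x = i) := by simp
    have h3 : ((univ.erase l).filter (fun x => σ x = i)).card
        = (univ.filter (fun x : {x : Fin m // x ≠ l} => σ x.1 = i)).card := by
      rw [← himg l σ i, card_image_of_injective _ Subtype.val_injective]
    rw [h1, card_insert_of_notMem h2, h3]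
  have hprod : ∀ (l : Fin m) (σ : Fin m → Fin n), σ l = i →
      F σ = γ l i * ∏ x : {x : Fin m // x ≠ l}, γ x.1 (σ x.1) := by
    intro l σ hl
    have h1 : ∏ x ∈ univ.erase l, γ x (σ x)
        = ∏ x : {x : Fin m // x ≠ l}, γ x.1 (σ x.1) :=
      Finset.prod_subtype (univ.erase l) (fun x => by simp) (fun x => γ x (σ x))
    calc F σ = ∏ x, γ x (σ x) := rfl
      _ = γ l (σ l) * ∏ x ∈ univ.erase l, γ x (σ x) :=
          (Finset.mul_prod_erase univ (fun x => γ x (σ x)) (mem_univ l)).symm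
      _ = γ l i * ∏ x : {x : Fin m // x ≠ l}, γ x.1 (σ x.1) := by rw [hl, h1]
  -- Step 1: rewrite each inner sum
  have step1 : ∀ l : Fin m,
      γ l i * (∑ τ ∈ univ.filter (fun τ : {x : Fin m // x ≠ l} → Fin n =>
          (univ.filter (fun x : {x : Fin m // x ≠ l} => τ x = i)).card = k ∧
          Qhat (fun j =>
            (univ.filter (fun x : {x : Fin m // x ≠ l} => τ x = j)).image
              Subtype.val)),
        ∏ x : {x : Fin m // x ≠ l}, γ x.1 (τ x)) =
      ∑ σ ∈ univ.filter (fun σ : Fin m → Fin n => σ l = i ∧ condA σ), F σ := by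
    intro l
    rw [Finset.mul_sum]
    set E : ({x : Fin m // x ≠ l} → Fin n) → (Fin m → Fin n) :=
      fun τ x => if h : x = l then i else τ ⟨x, h⟩ with hE
    have hEl : ∀ τ, E τ l = i := by intro τ; simp [hE]
    have hEres : ∀ τ (x : {x : Fin m // x ≠ l}), E τ x.1 = τ x := by
      intro τ x; simp [hE, x.2]
    refine Finset.sum_nbij' E
      (fun σ : Fin m → Fin n => fun x : {x : Fin m // x ≠ l} => σ x.1)
      ?_ ?_ ?_ ?_ ?_
    · -- forward membership
      intro τ hτ
      simp only [mem_filter, mem_univ, true_and] at hτ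
      rw [mem_filter]
      refine ⟨mem_univ _, hEl τ, ?_, ?_⟩
      · rw [hcard l (E τ) (hEl τ), ← hτ.1]
        congr 2
        ext x
        simp [hEres τ x]
      · refine (hQ _ _ ?_).mp hτ.2
        intro j hj
        rw [← herase l (E τ) (hEl τ) j hj, ← himg l (E τ) j]
        congr 2
        ext x
        simp [hEres τ x]
    · -- backward membership
      intro σ hσ
      simp only [mem_filter, mem_univ, true_and, hcondA] at hσ
      obtain ⟨hl, hc, hq⟩ := hσ
      rw [mem_filter]
      refine ⟨mem_univ _, ?_, ?_⟩
      · have h := hcard l σ hl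
        rw [hc] at h
        exact Nat.succ_injective h.symm
      · refine (hQ _ _ ?_).mp hq
        intro j hj
        rw [himg l σ j, herase l σ hl j hj]
    · -- left inverse
      intro τ hτ
      funext x
      exact hEres τ x
    · -- right inverse
      intro σ hσ
      simp only [mem_filter, mem_univ, true_and] at hσ
      funext x
      by_cases h : x = l
      · subst h; simp [hE, hσ.1]
      · simp [hE, h]
    · -- values agree
      intro τ hτ
      rw [hprod l (E τ) (hEl τ)]
      congr 1
      exact Finset.prod_congr rfl (fun x _ => by rw [hEres τ x])
  -- Step 2: sum over l
  have step2 : (∑ l : Fin m, γ l i *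
      (∑ τ ∈ univ.filter (fun τ : {x : Fin m // x ≠ l} → Fin n =>
          (univ.filter (fun x : {x : Fin m // x ≠ l} => τ x = i)).card = k ∧
          Qhat (fun j =>
            (univ.filter (fun x : {x : Fin m // x ≠ l} => τ x = j)).image
              Subtype.val)),
        ∏ x : {x : Fin m // x ≠ l}, γ x.1 (τ x)))
      = ((k : ℝ) + 1) * ∑ σ ∈ univ.filter condA, F σ := by
    calc _ = ∑ l : Fin m, ∑ σ ∈ univ.filter (fun σ : Fin m → Fin n => σ l = i ∧ condA σ), F σ :=
          Finset.sum_congr rfl (fun l _ => step1 l)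
      _ = ∑ l : Fin m, ∑ σ : Fin m → Fin n, if σ l = i ∧ condA σ then F σ else 0 := by
          refine Finset.sum_congr rfl (fun l _ => ?_)
          rw [Finset.sum_filter]
      _ = ∑ σ : Fin m → Fin n, ∑ l : Fin m, if σ l = i ∧ condA σ then F σ else 0 := by
          rw [Finset.sum_comm]
      _ = ∑ σ : Fin m → Fin n, if condA σ then ((k : ℝ) + 1) * F σ else 0 := by
          refine Finset.sum_congr rfl (fun σ _ => ?_)
          by_cases hc : condA σ
          · rw [if_pos hc]
            have hfun : (fun l : Fin m => if σ l = i ∧ condA σ then F σ else 0)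
                = fun l => if σ l = i then F σ else 0 := by
              funext l
              by_cases h : σ l = i
              · rw [if_pos ⟨h, hc⟩, if_pos h]
              · rw [if_neg (fun hh => h hh.1), if_neg h]
            rw [show (∑ l : Fin m, if σ l = i ∧ condA σ then F σ else 0)
                = ∑ l : Fin m, if σ l = i then F σ else 0 from by rw [hfun]]
            rw [← Finset.sum_filter, Finset.sum_const, hc.1, nsmul_eq_mul]
            push_cast
            ring
          · rw [if_neg hc]
            apply Finset.sum_eq_zero
            intro l _
            rw [if_neg (fun h => hc h.2)]
      _ = ((k : ℝ) + 1) * ∑ σ ∈ univ.filter condA, F σ := by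
          rw [Finset.sum_filter, Finset.mul_sum]
          refine Finset.sum_congr rfl (fun σ _ => ?_)
          by_cases hc : condA σ
          · rw [if_pos hc, if_pos hc]
          · rw [if_neg hc, if_neg hc, mul_zero]
  have hk : ((k : ℝ) + 1) ≠ 0 := by positivity
  rw [step2, one_div, inv_mul_cancel_left₀ hk]
end

section
/- There exist a finite bipartite graph G = (V ∪ K, E) and bounds l, u ∈ ℕ^K such that the generating polynomial ∑_k s_k x^k of valid G-maps does not have all real roots. Concretely, for V = {y, v, w}, K = {1}, E all three pairs {y,1},{v,1},{w,1}, l₁ = 1, u₁ = 3, the polynomial ∑_{k=0}^{3} s_k x^k = 3x + 3x² + x³ has a nonreal root. -/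
open Finset
open scoped Classical

/-- The generating polynomial of valid `G`-maps need not have all real
roots: for `V = {y,v,w}`, `K = {1}`, all three pairs edges, `l₁ = 1`,
`u₁ = 3`, one has `∑ s_k x^k = 3x + 3x² + x³`, which has a nonreal root. -/
theorem valid_Gmaps_poly_nonreal_root (s : ℕ → ℕ)
    (hs : ∀ k, s k = (univ.filter (fun f : Fin 3 → Option (Fin 1) =>
        (∀ j : Fin 1, 1 ≤ (univ.filter (fun v => f v = some j)).card ∧
          (univ.filter (fun v => f v = some j)).card ≤ 3) ∧
        (univ.filter (fun v => (f v).isSome)).card = k)).card) :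
    (∀ z : ℂ, ∑ k ∈ Finset.range 4, (s k : ℂ) * z ^ k =
      3 * z + 3 * z ^ 2 + z ^ 3) ∧
    ∃ z : ℂ, z.im ≠ 0 ∧ ∑ k ∈ Finset.range 4, (s k : ℂ) * z ^ k = 0 := by
  have h0 : s 0 = 0 := by rw [hs]; decide
  have h1 : s 1 = 3 := by rw [hs]; decide
  have h2 : s 2 = 3 := by rw [hs]; decide
  have h3 : s 3 = 1 := by rw [hs]; decide
  have key : ∀ z : ℂ, ∑ k ∈ Finset.range 4, (s k : ℂ) * z ^ k =
      3 * z + 3 * z ^ 2 + z ^ 3 := by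
    intro z
    simp [Finset.sum_range_succ, h0, h1, h2, h3]

  refine ⟨key, ⟨(-3 + Complex.I * Real.sqrt 3) / 2, ?_, ?_⟩⟩
  · simp [Complex.div_im, Complex.add_im]
  · rw [key]
    have h : (Real.sqrt 3 : ℂ) ^ 2 = 3 := by
      norm_cast
      rw [Real.sq_sqrt]; norm_num
    field_simp
    ring_nf
    rw [show ((Real.sqrt 3 : ℂ))^3 = (Real.sqrt 3:ℂ)^2 * Real.sqrt 3 by ring, h]
    rw [show (Complex.I)^3 = -Complex.I by
      rw [pow_succ, Complex.I_sq]; ring]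
    ring_nf
    rw [Complex.I_sq]
    ring
end
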